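/- Let ⟨𝒮, ℱ⟩ be an instance of OGTP and let ⟨𝒬, Q₀⟩ be the instance of the Query Determinacy Problem for Regular Path Queries produced by the reduction. Then the following are equivalent: (i) ⟨𝒮, ℱ⟩ has no solution; (ii) 𝒬 determines Q₀. -/

import Mathlib

/-- A graph database (structure) over vertex type `V` and edge-label alphabet `γ`:
`D x c y` means that there is an edge from `x` to `y` labeled with `c`. -/
def DB (V γ : Type) : Type := V → γ → V → Prop

/-- `pathSat D x w y` : the structure `D` satisfies `w(x,y)`, i.e. there is a directed
path from `x` to `y` whose consecutive edge labels spell the word `w`. -/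
def pathSat {V γ : Type} (D : DB V γ) : V → List γ → V → Prop
  | x, [], y => x = y
  | x, c :: w, y => ∃ z, D x c z ∧ pathSat D z w y

/-- `D ⊨ L(x,y)` for a language `L` : some word of `L` labels a path from `x` to `y`. -/
def langSat {V γ : Type} (D : DB V γ) (L : Language γ) (x y : V) : Prop :=
  ∃ w ∈ L, pathSat D x w y

/-- The answer `L(D)` of the path query given by the language `L` on the database `D`. -/
def qry {V γ : Type} (L : Language γ) (D : DB V γ) : Set (V × V) :=
  { p | langSat D L p.1 p.2 }

/-- All edge labels of `D` lie in the set `A`. -/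
def labelsIn {V γ : Type} (D : DB V γ) (A : Set γ) : Prop :=
  ∀ x c y, D x c y → c ∈ A

/-- A language is regular iff it is the language of some regular expression. -/
def IsRegularLang {γ : Type} (L : Language γ) : Prop :=
  ∃ r : RegularExpression γ, r.matches' = L

/-- `Qs` determines `Q0` : any two structures (over a common domain) on which all the
queries of `Qs` agree also agree on `Q0`. -/
def Determines {γ : Type} (Qs : Set (Language γ)) (Q0 : Language γ) : Prop :=
  ∀ (V : Type) (D₁ D₂ : DB V γ),
    (∀ L ∈ Qs, qry L D₁ = qry L D₂) → qry Q0 D₁ = qry Q0 D₂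

/-- `Qs` determines `Q0` over structures whose labels come from the alphabet `A`. -/
def DeterminesOn {γ : Type} (A : Set γ) (Qs : Set (Language γ)) (Q0 : Language γ) : Prop :=
  ∀ (V : Type) (D₁ D₂ : DB V γ), labelsIn D₁ A → labelsIn D₂ A →
    (∀ L ∈ Qs, qry L D₁ = qry L D₂) → qry Q0 D₁ = qry Q0 D₂

/-- Finite determinacy : the same notion with `D₁`, `D₂` ranging over finite structures. -/
def FinDeterminesOn {γ : Type} (A : Set γ) (Qs : Set (Language γ)) (Q0 : Language γ) : Prop :=
  ∀ (V : Type), Finite V → ∀ (D₁ D₂ : DB V γ), labelsIn D₁ A → labelsIn D₂ A →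
    (∀ L ∈ Qs, qry L D₁ = qry L D₂) → qry Q0 D₁ = qry Q0 D₂

/-! ### Our Grid Tiling Problem.
Shades are natural numbers, `black := 0`.  Directions are booleans:
`false` = Horizontal `H`, `true` = Vertical `V`. -/

/-- A solution of the OGTP instance `⟨S, F⟩` : a square grid of some size `m ≥ 1` (with
vertices `(i,j)`, `0 ≤ i,j ≤ m`, horizontal edges `(i,j) → (i+1,j)` and vertical edges
`(i,j) → (i,j+1)`), whose horizontal (resp. vertical) edges are labeled, via `hl` (resp.
`vl`), with shades from `S`, whose bottom-left vertical edge and upper-right horizontal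
edge are black, and which contains no directed path of length 2 whose pair of labels is
a forbidden pair from `F`. -/
def GridSol (S : Finset ℕ) (F : Finset ((Bool × ℕ) × (Bool × ℕ))) : Prop :=
  ∃ m : ℕ, 1 ≤ m ∧ ∃ hl vl : ℕ → ℕ → ℕ,
    (∀ i j, i < m → j ≤ m → hl i j ∈ S) ∧
    (∀ i j, i ≤ m → j < m → vl i j ∈ S) ∧
    vl 0 0 = 0 ∧
    hl (m - 1) m = 0 ∧
    (∀ i j, i + 1 < m → j ≤ m → ((false, hl i j), (false, hl (i + 1) j)) ∉ F) ∧
    (∀ i j, i < m → j < m → ((false, hl i j), (true, vl (i + 1) j)) ∉ F) ∧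
    (∀ i j, i < m → j < m → ((true, vl i j), (false, hl i (j + 1))) ∉ F) ∧
    (∀ i j, i ≤ m → j + 1 < m → ((true, vl i j), (true, vl i (j + 1))) ∉ F)

/-- Well-formedness of the set of forbidden pairs : all its shades belong to `S`. -/
def FWf (S : Finset ℕ) (F : Finset ((Bool × ℕ) × (Bool × ℕ))) : Prop :=
  ∀ p ∈ F, p.1.2 ∈ S ∧ p.2.2 ∈ S

/-! ### The alphabet of the reduction.
`Σ = {α, β, ω} ∪ Σ₀` with `Σ₀ = {A,B} × {H,V} × {W,C} × 𝒮`.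
Conventions: in `Sig.base ab dir temp shade`,
`ab = true` means `A` and `ab = false` means `B`;
`dir = false` means `H` (horizontal) and `dir = true` means `V` (vertical);
`temp = true` means `W` (warm) and `temp = false` means `C` (cold);
shades are natural numbers, `black := 0`. -/
inductive Sig : Type where
  | alpha : Sig
  | beta : Sig
  | omega : Sig
  | base : Bool → Bool → Bool → ℕ → Sig
deriving DecidableEq

/-- `c` is a letter of `Σ₀` (its shade belonging to `S`). -/
def inSigma0 (S : Finset ℕ) : Sig → Prop
  | .base _ _ _ s => s ∈ S
  | _ => False

/-- `c` is a letter of `Σ₀` with the indicated first three components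
(its shade ranging over `S`). -/
def isL (S : Finset ℕ) (ab dir temp : Bool) (c : Sig) : Prop :=
  ∃ s ∈ S, c = Sig.base ab dir temp s

/-- All letters of the word `u` belong to `Σ₀`. -/
def allS0 (S : Finset ℕ) (u : List Sig) : Prop := ∀ c ∈ u, inSigma0 S c

/-- `Q¹ = ω`. -/
def Qg1 : Language Sig := {[Sig.omega]}

/-- `Q² = α + β`. -/
def Qg2 : Language Sig := {[Sig.alpha], [Sig.beta]}

/-- `[B H W][A V W]`, the first summand of `Q³`. -/
def Qg3a (S : Finset ℕ) : Language Sig :=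
  { w | ∃ c1 c2, w = [c1, c2] ∧ isL S false false true c1 ∧ isL S true true true c2 }

/-- `[B V C][A H C]`, the second summand of `Q³`. -/
def Qg3b (S : Finset ℕ) : Language Sig :=
  { w | ∃ c1 c2, w = [c1, c2] ∧ isL S false true false c1 ∧ isL S true false false c2 }

/-- `[A H C][B V C]`, the first summand of `Q⁴`. -/
def Qg4a (S : Finset ℕ) : Language Sig :=
  { w | ∃ c1 c2, w = [c1, c2] ∧ isL S true false false c1 ∧ isL S false true false c2 }

/-- `[A V W][B H W]`, the second summand of `Q⁴`. -/
def Qg4b (S : Finset ℕ) : Language Sig :=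
  { w | ∃ c1 c2, w = [c1, c2] ∧ isL S true true true c1 ∧ isL S false false true c2 }

/-- `[B V C]`, the first summand of `Q⁵`. -/
def Qg5a (S : Finset ℕ) : Language Sig := { w | ∃ c, w = [c] ∧ isL S false true false c }

/-- `[B V W]`, the second summand of `Q⁵`. -/
def Qg5b (S : Finset ℕ) : Language Sig := { w | ∃ c, w = [c] ∧ isL S false true true c }

/-- `[B H W]`, the first summand of `Q⁶`. -/
def Qg6a (S : Finset ℕ) : Language Sig := { w | ∃ c, w = [c] ∧ isL S false false true c }

/-- `[B H C]`, the second summand of `Q⁶`. -/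
def Qg6b (S : Finset ℕ) : Language Sig := { w | ∃ c, w = [c] ∧ isL S false false false c }

/-- `[A V W]`, the first summand of `Q⁷`. -/
def Qg7a (S : Finset ℕ) : Language Sig := { w | ∃ c, w = [c] ∧ isL S true true true c }

/-- `[A V C]`, the second summand of `Q⁷`. -/
def Qg7b (S : Finset ℕ) : Language Sig := { w | ∃ c, w = [c] ∧ isL S true true false c }

/-- `[A H C]`, the first summand of `Q⁸`. -/
def Qg8a (S : Finset ℕ) : Language Sig := { w | ∃ c, w = [c] ∧ isL S true false false c }

/-- `[A H W]`, the second summand of `Q⁸`. -/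
def Qg8b (S : Finset ℕ) : Language Sig := { w | ∃ c, w = [c] ∧ isL S true false true c }

/-- `𝒬_good`, the set of 8 good languages. -/
def Qgood (S : Finset ℕ) : Set (Language Sig) :=
  {Qg1, Qg2, Qg3a S + Qg3b S, Qg4a S + Qg4b S, Qg5a S + Qg5b S,
   Qg6a S + Qg6b S, Qg7a S + Qg7b S, Qg8a S + Qg8b S}

/-- `β (Σ_{s ∈ 𝒮∖{black}} [A V W s]) Σ₀* ω`. -/
def Qbad1 (S : Finset ℕ) : Language Sig :=
  { w | ∃ s u, s ∈ S ∧ s ≠ 0 ∧ allS0 S u ∧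
      w = Sig.beta :: Sig.base true true true s :: (u ++ [Sig.omega]) }

/-- `β Σ₀* (Σ_{s ∈ 𝒮∖{black}} [B H W s]) ω`. -/
def Qbad2 (S : Finset ℕ) : Language Sig :=
  { w | ∃ s u, s ∈ S ∧ s ≠ 0 ∧ allS0 S u ∧
      w = Sig.beta :: (u ++ [Sig.base false false true s, Sig.omega]) }

/-- `β Σ₀* [• d W s][• d' W s'] Σ₀* ω`, for a forbidden pair `⟨(d,s),(d',s')⟩`. -/
def QbadF (S : Finset ℕ) (d : Bool) (s : ℕ) (d' : Bool) (s' : ℕ) : Language Sig :=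
  { w | ∃ u u', ∃ b b' : Bool, allS0 S u ∧ allS0 S u' ∧
      w = Sig.beta :: (u ++ Sig.base b d true s :: Sig.base b' d' true s' :: (u' ++ [Sig.omega])) }

/-- `𝒬_bad`. -/
def Qbad (S : Finset ℕ) (F : Finset ((Bool × ℕ) × (Bool × ℕ))) : Set (Language Sig) :=
  {Qbad1 S, Qbad2 S} ∪ { L | ∃ p ∈ F, L = QbadF S p.1.1 p.1.2 p.2.1 p.2.2 }

/-- `α Σ₀* [• • W] Σ₀* ω`. -/
def Qugly1 (S : Finset ℕ) : Language Sig :=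
  { w | ∃ u c u', allS0 S u ∧ allS0 S u' ∧ inSigma0 S c ∧
      (∃ ab d s, c = Sig.base ab d true s) ∧
      w = Sig.alpha :: (u ++ c :: (u' ++ [Sig.omega])) }

/-- `β Σ₀* [• • C] Σ₀* ω`. -/
def Qugly2 (S : Finset ℕ) : Language Sig :=
  { w | ∃ u c u', allS0 S u ∧ allS0 S u' ∧ inSigma0 S c ∧
      (∃ ab d s, c = Sig.base ab d false s) ∧
      w = Sig.beta :: (u ++ c :: (u' ++ [Sig.omega])) }

/-- `𝒬_ugly`. -/
def Qugly (S : Finset ℕ) : Set (Language Sig) := {Qugly1 S, Qugly2 S}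

/-- `𝒬 = 𝒬_good ∪ 𝒬_bad ∪ 𝒬_ugly`. -/
def QQ (S : Finset ℕ) (F : Finset ((Bool × ℕ) × (Bool × ℕ))) : Set (Language Sig) :=
  Qgood S ∪ Qbad S F ∪ Qugly S

/-- `[A H C][B V C]`, the repeated block of `Q_start`. -/
def startBlock (S : Finset ℕ) : Language Sig :=
  { w | ∃ c1 c2, w = [c1, c2] ∧ isL S true false false c1 ∧ isL S false true false c2 }

/-- `Q_start = α ([A H C][B V C])⁺ ω`. -/
def Qstart (S : Finset ℕ) : Language Sig :=
  { w | ∃ u, u ∈ KStar.kstar (startBlock S) ∧ u ≠ [] ∧ w = Sig.alpha :: (u ++ [Sig.omega]) }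

/-- The sum of the languages `QbadF` over all forbidden pairs of `F`. -/
def QbadFSum (S : Finset ℕ) (F : Finset ((Bool × ℕ) × (Bool × ℕ))) : Language Sig :=
  { w | ∃ p ∈ F, w ∈ QbadF S p.1.1 p.1.2 p.2.1 p.2.2 }

/-- `Q₀ = Q_start + Σ_{L ∈ 𝒬_bad ∪ 𝒬_ugly} L`. -/
def Q0L (S : Finset ℕ) (F : Finset ((Bool × ℕ) × (Bool × ℕ))) : Language Sig :=
  Qstart S + Qbad1 S + Qbad2 S + QbadFSum S F + Qugly1 S + Qugly2 S

/-- The alphabet `Σ = {α, β, ω} ∪ Σ₀` of the reduction, as a set of letters. -/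
def SigAlph (S : Finset ℕ) : Set Sig :=
  {Sig.alpha, Sig.beta, Sig.omega} ∪ { c | inSigma0 S c }
theorem pathSat_append {V γ : Type} {D : DB V γ} (w1 : List γ) {w2 : List γ} {x y : V} :
    pathSat D x (w1 ++ w2) y ↔ ∃ z, pathSat D x w1 z ∧ pathSat D z w2 y := by
  induction w1 generalizing x with
  | nil => simp [pathSat]
  | cons c w ih =>
      simp only [List.cons_append, pathSat, List.append_eq, ih]
      tauto

theorem pathSat_single {V γ : Type} {D : DB V γ} {c : γ} {x y : V} :
    pathSat D x [c] y ↔ D x c y := by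
  simp [pathSat]

theorem mem_qry {V γ : Type} {D : DB V γ} {L : Language γ} {x y : V} :
    (x, y) ∈ qry L D ↔ ∃ w ∈ L, pathSat D x w y := Iff.rfl

theorem qry_mono {V γ : Type} {D : DB V γ} {L M : Language γ} (h : L ≤ M) :
    qry L D ⊆ qry M D := by
  rintro ⟨a, b⟩ ⟨w, hw, hp⟩; exact ⟨w, h hw, hp⟩

theorem mem_Q0L_iff {S : Finset ℕ} {F : Finset ((Bool × ℕ) × (Bool × ℕ))} {w : List Sig} :
    w ∈ Q0L S F ↔ w ∈ Qstart S ∨ w ∈ Qbad1 S ∨ w ∈ Qbad2 S ∨ w ∈ QbadFSum S F ∨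
      w ∈ Qugly1 S ∨ w ∈ Qugly2 S := by
  simp only [Q0L, Language.mem_add]; tauto

theorem pathSat_letters {V : Type} {D : DB V Sig} {x y : V} {w : List Sig}
    (h : pathSat D x w y) : ∀ c ∈ w, ∃ a b, D a c b := by
  induction w generalizing x with
  | nil => simp
  | cons c t ih =>
      obtain ⟨z, hz, hp⟩ := h
      intro d hd
      rcases List.mem_cons.1 hd with rfl | hd
      · exact ⟨x, z, hz⟩
      · exact ih hp d hd

theorem shade_mem {V : Type} {S : Finset ℕ} {D : DB V Sig} (hD : labelsIn D (SigAlph S))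
    {a b : V} {p q r : Bool} {s : ℕ} (h : D a (.base p q r s) b) : s ∈ S := by
  have := hD _ _ _ h
  simp only [SigAlph, Set.mem_union, Set.mem_insert_iff, Set.mem_singleton_iff,
    Set.mem_setOf_eq] at this
  rcases this with (h | h | h) | h <;> simp_all [inSigma0]

theorem inSigma0_base {S : Finset ℕ} {p q r : Bool} {s : ℕ} (hs : s ∈ S) :
    inSigma0 S (.base p q r s) := hs

theorem join_app {α : Type} (l k : List (List α)) : (l ++ k).flatten = l.flatten ++ k.flatten := by
  simp

theorem join_nil_iff {α : Type} (l : List (List α)) : l.flatten = [] ↔ ∀ x ∈ l, x = [] := by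
  simp
theorem pathSat_pair {V : Type} {D : DB V Sig} {c1 c2 : Sig} {x y : V} :
    pathSat D x [c1, c2] y ↔ ∃ z, D x c1 z ∧ D z c2 y := by
  simp [pathSat]

section Trans
variable {V : Type} {S : Finset ℕ} {F : Finset ((Bool × ℕ) × (Bool × ℕ))}
variable {D1 D2 : DB V Sig}

theorem mem_QQ_good {L : Language Sig} (h : L ∈ Qgood S) : L ∈ QQ S F :=
  Or.inl (Or.inl h)

theorem mem_QQ_bad1 : Qbad1 S ∈ QQ S F := Or.inl (Or.inr (Or.inl (by simp)))
theorem mem_QQ_bad2 : Qbad2 S ∈ QQ S F := Or.inl (Or.inr (Or.inl (by simp)))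
theorem mem_QQ_badF {p : (Bool × ℕ) × (Bool × ℕ)} (hp : p ∈ F) :
    QbadF S p.1.1 p.1.2 p.2.1 p.2.2 ∈ QQ S F := Or.inl (Or.inr (Or.inr ⟨p, hp, rfl⟩))
theorem mem_QQ_ugly1 : Qugly1 S ∈ QQ S F := Or.inr (by simp [Qugly])
theorem mem_QQ_ugly2 : Qugly2 S ∈ QQ S F := Or.inr (by simp [Qugly])

theorem mem_QQ_Q1 : Qg1 ∈ QQ S F := mem_QQ_good (by simp [Qgood])
theorem mem_QQ_Q2 : Qg2 ∈ QQ S F := mem_QQ_good (by simp [Qgood])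
theorem mem_QQ_Q3 : Qg3a S + Qg3b S ∈ QQ S F := mem_QQ_good (by simp [Qgood])
theorem mem_QQ_Q4 : Qg4a S + Qg4b S ∈ QQ S F := mem_QQ_good (by simp [Qgood])
theorem mem_QQ_Q5 : Qg5a S + Qg5b S ∈ QQ S F := mem_QQ_good (by simp [Qgood])
theorem mem_QQ_Q6 : Qg6a S + Qg6b S ∈ QQ S F := mem_QQ_good (by simp [Qgood])
theorem mem_QQ_Q7 : Qg7a S + Qg7b S ∈ QQ S F := mem_QQ_good (by simp [Qgood])
theorem mem_QQ_Q8 : Qg8a S + Qg8b S ∈ QQ S F := mem_QQ_good (by simp [Qgood])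

variable (hag : ∀ L ∈ QQ S F, qry L D1 = qry L D2)

include hag in
theorem trans_omega {a b : V} (h : D1 a .omega b) : D2 a .omega b := by
  have h1 : (a, b) ∈ qry Qg1 D1 := ⟨[Sig.omega], rfl, pathSat_single.2 h⟩
  rw [hag _ mem_QQ_Q1] at h1
  obtain ⟨w, hw, hp⟩ := h1
  have : w = [Sig.omega] := hw
  subst this
  exact pathSat_single.1 hp

include hag in
theorem trans_alpha {a b : V} (h : D1 a .alpha b) : D2 a .alpha b ∨ D2 a .beta b := by
  have h1 : (a, b) ∈ qry Qg2 D1 := ⟨[Sig.alpha], Or.inl rfl, pathSat_single.2 h⟩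
  rw [hag _ mem_QQ_Q2] at h1
  obtain ⟨w, hw, hp⟩ := h1
  rcases hw with hw | hw
  · subst hw; exact Or.inl (pathSat_single.1 hp)
  · replace hw : w = [Sig.beta] := hw; subst hw; exact Or.inr (pathSat_single.1 hp)

include hag in
theorem trans_single {a b : V} {ab dir t : Bool} {s : ℕ} (hs : s ∈ S)
    (h : D1 a (.base ab dir t s) b) :
    ∃ t' s', s' ∈ S ∧ D2 a (.base ab dir t' s') b := by
  have key : ∀ L : Language Sig, L ∈ QQ S F →
      (∀ w, w ∈ L ↔ ∃ t' s', s' ∈ S ∧ w = [Sig.base ab dir t' s']) →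
      ∃ t' s', s' ∈ S ∧ D2 a (.base ab dir t' s') b := by
    intro L hL hiff
    have h1 : (a, b) ∈ qry L D1 := ⟨_, (hiff _).2 ⟨t, s, hs, rfl⟩, pathSat_single.2 h⟩
    rw [hag L hL] at h1
    obtain ⟨w, hw, hp⟩ := h1
    obtain ⟨t', s', hs', rfl⟩ := (hiff _).1 hw
    exact ⟨t', s', hs', pathSat_single.1 hp⟩
  cases ab <;> cases dir
  · exact key _ mem_QQ_Q6 (by
      intro w
      simp only [Language.mem_add, Qg6a, Qg6b, isL, Set.mem_setOf_eq]
      constructor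
      · rintro (⟨c, rfl, s', hs', rfl⟩ | ⟨c, rfl, s', hs', rfl⟩)
        exacts [⟨true, s', hs', rfl⟩, ⟨false, s', hs', rfl⟩]
      · rintro ⟨t', s', hs', rfl⟩
        cases t'
        exacts [Or.inr ⟨_, rfl, s', hs', rfl⟩, Or.inl ⟨_, rfl, s', hs', rfl⟩])
  · exact key _ mem_QQ_Q5 (by
      intro w
      simp only [Language.mem_add, Qg5a, Qg5b, isL, Set.mem_setOf_eq]
      constructor
      · rintro (⟨c, rfl, s', hs', rfl⟩ | ⟨c, rfl, s', hs', rfl⟩)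
        exacts [⟨false, s', hs', rfl⟩, ⟨true, s', hs', rfl⟩]
      · rintro ⟨t', s', hs', rfl⟩
        cases t'
        exacts [Or.inl ⟨_, rfl, s', hs', rfl⟩, Or.inr ⟨_, rfl, s', hs', rfl⟩])
  · exact key _ mem_QQ_Q8 (by
      intro w
      simp only [Language.mem_add, Qg8a, Qg8b, isL, Set.mem_setOf_eq]
      constructor
      · rintro (⟨c, rfl, s', hs', rfl⟩ | ⟨c, rfl, s', hs', rfl⟩)
        exacts [⟨false, s', hs', rfl⟩, ⟨true, s', hs', rfl⟩]
      · rintro ⟨t', s', hs', rfl⟩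
        cases t'
        exacts [Or.inl ⟨_, rfl, s', hs', rfl⟩, Or.inr ⟨_, rfl, s', hs', rfl⟩])
  · exact key _ mem_QQ_Q7 (by
      intro w
      simp only [Language.mem_add, Qg7a, Qg7b, isL, Set.mem_setOf_eq]
      constructor
      · rintro (⟨c, rfl, s', hs', rfl⟩ | ⟨c, rfl, s', hs', rfl⟩)
        exacts [⟨true, s', hs', rfl⟩, ⟨false, s', hs', rfl⟩]
      · rintro ⟨t', s', hs', rfl⟩
        cases t'
        exacts [Or.inr ⟨_, rfl, s', hs', rfl⟩, Or.inl ⟨_, rfl, s', hs', rfl⟩])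

/-- Membership characterization for a 2-letter block language. -/
theorem mem_block_iff {S : Finset ℕ} {a1 d1 t1 a2 d2 t2 : Bool} {w : List Sig} :
    (w ∈ ({ w | ∃ c1 c2, w = [c1, c2] ∧ isL S a1 d1 t1 c1 ∧ isL S a2 d2 t2 c2 } :
      Language Sig)) ↔
    ∃ s ∈ S, ∃ s' ∈ S, w = [Sig.base a1 d1 t1 s, Sig.base a2 d2 t2 s'] := by
  constructor
  · rintro ⟨c1, c2, rfl, ⟨s, hs, rfl⟩, ⟨s', hs', rfl⟩⟩
    exact ⟨s, hs, s', hs', rfl⟩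
  · rintro ⟨s, hs, s', hs', rfl⟩
    exact ⟨_, _, rfl, ⟨s, hs, rfl⟩, ⟨s', hs', rfl⟩⟩

include hag in
/-- Transfer along `Q⁴ = [A H C][B V C] + [A V W][B H W]`, given a cold witness in `D₁`. -/
theorem trans_Q4 {a b z : V} {s s' : ℕ} (hs : s ∈ S) (hs' : s' ∈ S)
    (h1 : D1 a (.base true false false s) z) (h2 : D1 z (.base false true false s') b) :
    ∃ z', (∃ s1 ∈ S, ∃ s2 ∈ S, D2 a (.base true false false s1) z' ∧
              D2 z' (.base false true false s2) b) ∨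
          (∃ s1 ∈ S, ∃ s2 ∈ S, D2 a (.base true true true s1) z' ∧
              D2 z' (.base false false true s2) b) := by
  have hm : (a, b) ∈ qry (Qg4a S + Qg4b S) D1 :=
    ⟨_, Or.inl (mem_block_iff.2 ⟨s, hs, s', hs', rfl⟩), pathSat_pair.2 ⟨z, h1, h2⟩⟩
  rw [hag _ mem_QQ_Q4] at hm
  obtain ⟨w, hw, hp⟩ := hm
  rcases hw with hw | hw
  · obtain ⟨s1, h1', s2, h2', rfl⟩ := (mem_block_iff (S := S)).1 hw
    obtain ⟨z', e1, e2⟩ := pathSat_pair.1 hp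
    exact ⟨z', Or.inl ⟨s1, h1', s2, h2', e1, e2⟩⟩
  · obtain ⟨s1, h1', s2, h2', rfl⟩ := (mem_block_iff (S := S)).1 hw
    obtain ⟨z', e1, e2⟩ := pathSat_pair.1 hp
    exact ⟨z', Or.inr ⟨s1, h1', s2, h2', e1, e2⟩⟩

include hag in
/-- Transfer along `Q⁴`, given a warm witness in `D₁`. -/
theorem trans_Q4' {a b z : V} {s s' : ℕ} (hs : s ∈ S) (hs' : s' ∈ S)
    (h1 : D1 a (.base true true true s) z) (h2 : D1 z (.base false false true s') b) :
    ∃ z', (∃ s1 ∈ S, ∃ s2 ∈ S, D2 a (.base true false false s1) z' ∧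
              D2 z' (.base false true false s2) b) ∨
          (∃ s1 ∈ S, ∃ s2 ∈ S, D2 a (.base true true true s1) z' ∧
              D2 z' (.base false false true s2) b) := by
  have hm : (a, b) ∈ qry (Qg4a S + Qg4b S) D1 :=
    ⟨_, Or.inr (mem_block_iff.2 ⟨s, hs, s', hs', rfl⟩), pathSat_pair.2 ⟨z, h1, h2⟩⟩
  rw [hag _ mem_QQ_Q4] at hm
  obtain ⟨w, hw, hp⟩ := hm
  rcases hw with hw | hw
  · obtain ⟨s1, h1', s2, h2', rfl⟩ := (mem_block_iff (S := S)).1 hw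
    obtain ⟨z', e1, e2⟩ := pathSat_pair.1 hp
    exact ⟨z', Or.inl ⟨s1, h1', s2, h2', e1, e2⟩⟩
  · obtain ⟨s1, h1', s2, h2', rfl⟩ := (mem_block_iff (S := S)).1 hw
    obtain ⟨z', e1, e2⟩ := pathSat_pair.1 hp
    exact ⟨z', Or.inr ⟨s1, h1', s2, h2', e1, e2⟩⟩

include hag in
/-- Transfer along `Q³ = [B H W][A V W] + [B V C][A H C]`, given a warm witness in `D₁`. -/
theorem trans_Q3 {a b z : V} {s s' : ℕ} (hs : s ∈ S) (hs' : s' ∈ S)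
    (h1 : D1 a (.base false false true s) z) (h2 : D1 z (.base true true true s') b) :
    ∃ z', (∃ s1 ∈ S, ∃ s2 ∈ S, D2 a (.base false false true s1) z' ∧
              D2 z' (.base true true true s2) b) ∨
          (∃ s1 ∈ S, ∃ s2 ∈ S, D2 a (.base false true false s1) z' ∧
              D2 z' (.base true false false s2) b) := by
  have hm : (a, b) ∈ qry (Qg3a S + Qg3b S) D1 :=
    ⟨_, Or.inl (mem_block_iff.2 ⟨s, hs, s', hs', rfl⟩), pathSat_pair.2 ⟨z, h1, h2⟩⟩
  rw [hag _ mem_QQ_Q3] at hm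
  obtain ⟨w, hw, hp⟩ := hm
  rcases hw with hw | hw
  · obtain ⟨s1, h1', s2, h2', rfl⟩ := (mem_block_iff (S := S)).1 hw
    obtain ⟨z', e1, e2⟩ := pathSat_pair.1 hp
    exact ⟨z', Or.inl ⟨s1, h1', s2, h2', e1, e2⟩⟩
  · obtain ⟨s1, h1', s2, h2', rfl⟩ := (mem_block_iff (S := S)).1 hw
    obtain ⟨z', e1, e2⟩ := pathSat_pair.1 hp
    exact ⟨z', Or.inr ⟨s1, h1', s2, h2', e1, e2⟩⟩

include hag in
/-- Transfer along `Q³`, given a cold witness in `D₁`. -/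
theorem trans_Q3' {a b z : V} {s s' : ℕ} (hs : s ∈ S) (hs' : s' ∈ S)
    (h1 : D1 a (.base false true false s) z) (h2 : D1 z (.base true false false s') b) :
    ∃ z', (∃ s1 ∈ S, ∃ s2 ∈ S, D2 a (.base false false true s1) z' ∧
              D2 z' (.base true true true s2) b) ∨
          (∃ s1 ∈ S, ∃ s2 ∈ S, D2 a (.base false true false s1) z' ∧
              D2 z' (.base true false false s2) b) := by
  have hm : (a, b) ∈ qry (Qg3a S + Qg3b S) D1 :=
    ⟨_, Or.inr (mem_block_iff.2 ⟨s, hs, s', hs', rfl⟩), pathSat_pair.2 ⟨z, h1, h2⟩⟩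
  rw [hag _ mem_QQ_Q3] at hm
  obtain ⟨w, hw, hp⟩ := hm
  rcases hw with hw | hw
  · obtain ⟨s1, h1', s2, h2', rfl⟩ := (mem_block_iff (S := S)).1 hw
    obtain ⟨z', e1, e2⟩ := pathSat_pair.1 hp
    exact ⟨z', Or.inl ⟨s1, h1', s2, h2', e1, e2⟩⟩
  · obtain ⟨s1, h1', s2, h2', rfl⟩ := (mem_block_iff (S := S)).1 hw
    obtain ⟨z', e1, e2⟩ := pathSat_pair.1 hp
    exact ⟨z', Or.inr ⟨s1, h1', s2, h2', e1, e2⟩⟩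

end Trans
section Escape
variable {V : Type} {S : Finset ℕ} {F : Finset ((Bool × ℕ) × (Bool × ℕ))}
variable {D1 D2 : DB V Sig} {x y : V}

theorem allS0_nil : allS0 S [] := by intro c hc; cases hc
theorem allS0_cons {c u} (hc : inSigma0 S c) (hu : allS0 S u) : allS0 S (c :: u) := by
  intro d hd; rcases List.mem_cons.1 hd with rfl | hd
  exacts [hc, hu d hd]
theorem allS0_append {u v : List Sig} (hu : allS0 S u) (hv : allS0 S v) :
    allS0 S (u ++ v) := by
  intro d hd; rcases List.mem_append.1 hd with hd | hd
  exacts [hu d hd, hv d hd]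
theorem allS0_single {c} (hc : inSigma0 S c) : allS0 S [c] := allS0_cons hc allS0_nil

theorem Qugly1_le_Q0L : Qugly1 S ≤ Q0L S F := fun _ hw => mem_Q0L_iff.2 (by tauto)
theorem Qugly2_le_Q0L : Qugly2 S ≤ Q0L S F := fun _ hw => mem_Q0L_iff.2 (by tauto)
theorem Qbad1_le_Q0L : Qbad1 S ≤ Q0L S F := fun _ hw => mem_Q0L_iff.2 (by tauto)
theorem Qbad2_le_Q0L : Qbad2 S ≤ Q0L S F := fun _ hw => mem_Q0L_iff.2 (by tauto)
theorem QbadFSum_le_Q0L : QbadFSum S F ≤ Q0L S F := fun _ hw => mem_Q0L_iff.2 (by tauto)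
theorem Qstart_le_Q0L : Qstart S ≤ Q0L S F := fun _ hw => mem_Q0L_iff.2 (by tauto)

/-- Escape via `Qugly2` : a `β … ω` path in `D₂` containing a cold letter. -/
theorem escape_ugly2 (h2 : labelsIn D2 (SigAlph S)) {v0 a b g : V}
    (hb : D2 x .beta v0) (hw : D2 g .omega y)
    {w1 w2 : List Sig} (hw1 : allS0 S w1) (hw2 : allS0 S w2)
    (hp1 : pathSat D2 v0 w1 a) {ab d : Bool} {s : ℕ}
    (hc : D2 a (.base ab d false s) b) (hp2 : pathSat D2 b w2 g) :
    (x, y) ∈ qry (Q0L S F) D2 := by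
  refine ⟨Sig.beta :: (w1 ++ (Sig.base ab d false s) :: (w2 ++ [Sig.omega])),
    Qugly2_le_Q0L ⟨w1, _, w2, hw1, hw2, inSigma0_base (shade_mem h2 hc), ⟨ab, d, s, rfl⟩, rfl⟩, ?_⟩
  exact ⟨v0, hb, (pathSat_append w1).2 ⟨a, hp1, b, hc,
    (pathSat_append w2).2 ⟨g, hp2, pathSat_single.2 hw⟩⟩⟩

/-- Escape via `Qugly1` in `D₁`, transferred to `D₂` by query agreement. -/
theorem escape_ugly1 (hag : ∀ L ∈ QQ S F, qry L D1 = qry L D2)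
    (h1 : labelsIn D1 (SigAlph S)) {v0 a b g : V}
    (ha : D1 x .alpha v0) (hw : D1 g .omega y)
    {w1 w2 : List Sig} (hw1 : allS0 S w1) (hw2 : allS0 S w2)
    (hp1 : pathSat D1 v0 w1 a) {ab d : Bool} {s : ℕ}
    (hc : D1 a (.base ab d true s) b) (hp2 : pathSat D1 b w2 g) :
    (x, y) ∈ qry (Q0L S F) D2 := by
  have hm : (x, y) ∈ qry (Qugly1 S) D1 := by
    refine ⟨Sig.alpha :: (w1 ++ (Sig.base ab d true s) :: (w2 ++ [Sig.omega])),
      ⟨w1, _, w2, hw1, hw2, inSigma0_base (shade_mem h1 hc), ⟨ab, d, s, rfl⟩, rfl⟩, ?_⟩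
    exact ⟨v0, ha, (pathSat_append w1).2 ⟨a, hp1, b, hc,
      (pathSat_append w2).2 ⟨g, hp2, pathSat_single.2 hw⟩⟩⟩
  rw [hag _ mem_QQ_ugly1] at hm
  exact qry_mono Qugly1_le_Q0L hm

/-- Escape via `Qbad1` : `β` followed by a non-black `[A V W]`. -/
theorem escape_bad1 {v0 b g : V} (hb : D2 x .beta v0) (hw : D2 g .omega y)
    {s : ℕ} (hs : s ∈ S) (hs0 : s ≠ 0) (hc : D2 v0 (.base true true true s) b)
    {w2 : List Sig} (hw2 : allS0 S w2) (hp2 : pathSat D2 b w2 g) :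
    (x, y) ∈ qry (Q0L S F) D2 := by
  refine ⟨Sig.beta :: Sig.base true true true s :: (w2 ++ [Sig.omega]),
    Qbad1_le_Q0L ⟨s, w2, hs, hs0, hw2, rfl⟩, ?_⟩
  exact ⟨v0, hb, b, hc, (pathSat_append w2).2 ⟨g, hp2, pathSat_single.2 hw⟩⟩

/-- Escape via `Qbad2` : a non-black `[B H W]` just before `ω`. -/
theorem escape_bad2 {v0 a g : V} (hb : D2 x .beta v0) (hw : D2 g .omega y)
    {s : ℕ} (hs : s ∈ S) (hs0 : s ≠ 0) (hc : D2 a (.base false false true s) g)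
    {w1 : List Sig} (hw1 : allS0 S w1) (hp1 : pathSat D2 v0 w1 a) :
    (x, y) ∈ qry (Q0L S F) D2 := by
  refine ⟨Sig.beta :: (w1 ++ [Sig.base false false true s, Sig.omega]),
    Qbad2_le_Q0L ⟨s, w1, hs, hs0, hw1, rfl⟩, ?_⟩
  exact ⟨v0, hb, (pathSat_append w1).2 ⟨a, hp1, g, hc, pathSat_single.2 hw⟩⟩

/-- Escape via a forbidden pair : a warm 2-path whose label pair is in `ℱ`. -/
theorem escape_badF {v0 a b c g : V} (hb : D2 x .beta v0) (hw : D2 g .omega y)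
    {d d' b1 b2 : Bool} {s s' : ℕ} (hp : ((d, s), (d', s')) ∈ F)
    (hc1 : D2 a (.base b1 d true s) b) (hc2 : D2 b (.base b2 d' true s') c)
    {w1 w2 : List Sig} (hw1 : allS0 S w1) (hw2 : allS0 S w2)
    (hp1 : pathSat D2 v0 w1 a) (hp2 : pathSat D2 c w2 g) :
    (x, y) ∈ qry (Q0L S F) D2 := by
  refine ⟨Sig.beta :: (w1 ++ (Sig.base b1 d true s) :: (Sig.base b2 d' true s') ::
      (w2 ++ [Sig.omega])),
    QbadFSum_le_Q0L ⟨((d, s), (d', s')), hp, w1, w2, b1, b2, hw1, hw2, rfl⟩, ?_⟩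
  exact ⟨v0, hb, (pathSat_append w1).2 ⟨a, hp1, b, hc1, c, hc2,
    (pathSat_append w2).2 ⟨g, hp2, pathSat_single.2 hw⟩⟩⟩

end Escape
/-- `true` = `A` iff the coordinate sum is even. -/
def abv (i j : ℕ) : Bool := decide ((i + j) % 2 = 0)

section Walks
variable {V : Type} {S : Finset ℕ} {D : DB V Sig} {p : ℕ → ℕ → V} {m k : ℕ}

theorem walk_trans {a b c : V} (h1 : ∃ w, allS0 S w ∧ pathSat D a w b)
    (h2 : ∃ w, allS0 S w ∧ pathSat D b w c) : ∃ w, allS0 S w ∧ pathSat D a w c := by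
  obtain ⟨w1, hw1, hp1⟩ := h1
  obtain ⟨w2, hw2, hp2⟩ := h2
  exact ⟨w1 ++ w2, allS0_append hw1 hw2, (pathSat_append w1).2 ⟨b, hp1, hp2⟩⟩

/-- Weak (untyped) vertical edges in the upper triangle, band `k`. -/
def SupVw (S : Finset ℕ) (D : DB V Sig) (p : ℕ → ℕ → V) (m k : ℕ) : Prop :=
  ∀ i j, i ≤ j → j < m → j < i + k → ∃ c, inSigma0 S c ∧ D (p i j) c (p i (j+1))

def SupHw (S : Finset ℕ) (D : DB V Sig) (p : ℕ → ℕ → V) (m k : ℕ) : Prop :=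
  ∀ i j, i < j → j ≤ m → j ≤ i + k → ∃ c, inSigma0 S c ∧ D (p i j) c (p (i+1) j)

def SubVw (S : Finset ℕ) (D : DB V Sig) (p : ℕ → ℕ → V) (m k : ℕ) : Prop :=
  ∀ i j, j < i → i ≤ m → i ≤ j + k → ∃ c, inSigma0 S c ∧ D (p i j) c (p i (j+1))

def SubHw (S : Finset ℕ) (D : DB V Sig) (p : ℕ → ℕ → V) (m k : ℕ) : Prop :=
  ∀ i j, j ≤ i → i < m → i < j + k → ∃ c, inSigma0 S c ∧ D (p i j) c (p (i+1) j)

theorem sup_diag (hV : SupVw S D p m k) (hH : SupHw S D p m k) (hk : 1 ≤ k)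
    {a n : ℕ} (h : a ≤ n) (hn : n ≤ m) :
    ∃ w, allS0 S w ∧ pathSat D (p a a) w (p n n) := by
  induction n, h using Nat.le_induction with
  | base => exact ⟨[], allS0_nil, rfl⟩
  | succ n han ih =>
      obtain ⟨w, hw, hp⟩ := ih (by omega)
      obtain ⟨c1, hc1, e1⟩ := hV n n le_rfl (by omega) (by omega)
      obtain ⟨c2, hc2, e2⟩ := hH n (n+1) (by omega) (by omega) (by omega)
      exact ⟨w ++ [c1, c2], allS0_append hw (allS0_cons hc1 (allS0_single hc2)),
        (pathSat_append w).2 ⟨_, hp, _, e1, _, e2, rfl⟩⟩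

theorem sub_diag (hV : SubVw S D p m k) (hH : SubHw S D p m k) (hk : 1 ≤ k)
    {a n : ℕ} (h : a ≤ n) (hn : n ≤ m) :
    ∃ w, allS0 S w ∧ pathSat D (p a a) w (p n n) := by
  induction n, h using Nat.le_induction with
  | base => exact ⟨[], allS0_nil, rfl⟩
  | succ n han ih =>
      obtain ⟨w, hw, hp⟩ := ih (by omega)
      obtain ⟨c1, hc1, e1⟩ := hH n n le_rfl (by omega) (by omega)
      obtain ⟨c2, hc2, e2⟩ := hV (n+1) n (by omega) (by omega) (by omega)
      exact ⟨w ++ [c1, c2], allS0_append hw (allS0_cons hc1 (allS0_single hc2)),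
        (pathSat_append w).2 ⟨_, hp, _, e1, _, e2, rfl⟩⟩

theorem sup_climb (hV : SupVw S D p m k) {i j j' : ℕ} (h : j ≤ j') (hij : i ≤ j) :
    j' ≤ m → j' ≤ i + k → ∃ w, allS0 S w ∧ pathSat D (p i j) w (p i j') := by
  induction j', h using Nat.le_induction with
  | base => exact fun _ _ => ⟨[], allS0_nil, rfl⟩
  | succ n hn ih =>
      intro hm' hb
      obtain ⟨w, hw, hp⟩ := ih (by omega) (by omega)
      obtain ⟨c, hc, e⟩ := hV i n (by omega) (by omega) (by omega)
      exact ⟨w ++ [c], allS0_append hw (allS0_single hc),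
        (pathSat_append w).2 ⟨_, hp, _, e, rfl⟩⟩

theorem sub_climb (hV : SubVw S D p m k) {i j j' : ℕ} (h : j ≤ j') (hm' : i ≤ m)
    (hb : i ≤ j + k) : j' ≤ i → ∃ w, allS0 S w ∧ pathSat D (p i j) w (p i j') := by
  induction j', h using Nat.le_induction with
  | base => exact fun _ => ⟨[], allS0_nil, rfl⟩
  | succ n hn ih =>
      intro hij
      obtain ⟨w, hw, hp⟩ := ih (by omega)
      obtain ⟨c, hc, e⟩ := hV i n (by omega) (by omega) (by omega)
      exact ⟨w ++ [c], allS0_append hw (allS0_single hc),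
        (pathSat_append w).2 ⟨_, hp, _, e, rfl⟩⟩

theorem sup_row (hH : SupHw S D p m k) {i i' j : ℕ} (h : i ≤ i') (hm' : j ≤ m)
    (hb : j ≤ i + k) : i' ≤ j → ∃ w, allS0 S w ∧ pathSat D (p i j) w (p i' j) := by
  induction i', h using Nat.le_induction with
  | base => exact fun _ => ⟨[], allS0_nil, rfl⟩
  | succ n hn ih =>
      intro hij
      obtain ⟨w, hw, hp⟩ := ih (by omega)
      obtain ⟨c, hc, e⟩ := hH n j (by omega) (by omega) (by omega)
      exact ⟨w ++ [c], allS0_append hw (allS0_single hc),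
        (pathSat_append w).2 ⟨_, hp, _, e, rfl⟩⟩

theorem sub_row (hH : SubHw S D p m k) {i i' j : ℕ} (h : i ≤ i') (hij : j ≤ i) :
    i' ≤ m → i' ≤ j + k → ∃ w, allS0 S w ∧ pathSat D (p i j) w (p i' j) := by
  induction i', h using Nat.le_induction with
  | base => exact fun _ _ => ⟨[], allS0_nil, rfl⟩
  | succ n hn ih =>
      intro hm' hb
      obtain ⟨w, hw, hp⟩ := ih (by omega) (by omega)
      obtain ⟨c, hc, e⟩ := hH n j (by omega) (by omega) (by omega)
      exact ⟨w ++ [c], allS0_append hw (allS0_single hc),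
        (pathSat_append w).2 ⟨_, hp, _, e, rfl⟩⟩

/-- Reach any point of the upper band from the corner `p 0 0`. -/
theorem sup_reach_from (hV : SupVw S D p m k) (hH : SupHw S D p m k) (hk : 1 ≤ k)
    {i j : ℕ} (hij : i ≤ j) (hjm : j ≤ m) (hb : j ≤ i + k) :
    ∃ w, allS0 S w ∧ pathSat D (p 0 0) w (p i j) :=
  walk_trans (sup_diag hV hH hk (Nat.zero_le i) (le_trans hij hjm))
    (sup_climb hV hij le_rfl hjm hb)

theorem sup_reach_to (hV : SupVw S D p m k) (hH : SupHw S D p m k) (hk : 1 ≤ k)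
    {i j : ℕ} (hij : i ≤ j) (hjm : j ≤ m) (hb : j ≤ i + k) :
    ∃ w, allS0 S w ∧ pathSat D (p i j) w (p m m) :=
  walk_trans (sup_row hH hij hjm hb le_rfl) (sup_diag hV hH hk hjm le_rfl)

theorem sub_reach_from (hV : SubVw S D p m k) (hH : SubHw S D p m k) (hk : 1 ≤ k)
    {i j : ℕ} (hji : j ≤ i) (him : i ≤ m) (hb : i ≤ j + k) :
    ∃ w, allS0 S w ∧ pathSat D (p 0 0) w (p i j) :=
  walk_trans (sub_diag hV hH hk (Nat.zero_le j) (le_trans hji him))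
    (sub_row hH hji le_rfl him hb)

theorem sub_reach_to (hV : SubVw S D p m k) (hH : SubHw S D p m k) (hk : 1 ≤ k)
    {i j : ℕ} (hji : j ≤ i) (him : i ≤ m) (hb : i ≤ j + k) :
    ∃ w, allS0 S w ∧ pathSat D (p i j) w (p m m) :=
  walk_trans (sub_climb hV hji him hb le_rfl) (sub_diag hV hH hk him le_rfl)

end Walks
/-- Invariant for the upper (super-diagonal) band of width `k` : a warm grid in `D₂`
and a cold grid in `D₁`, with the `A/B` component determined by coordinate parity. -/
def SupInv {V : Type} (D1 D2 : DB V Sig) (u : ℕ → V) (m k : ℕ) (p : ℕ → ℕ → V) : Prop :=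
  (∀ i, p i i = u i) ∧
  (∀ i j, i ≤ j → j < m → j < i + k →
    (∃ s, D2 (p i j) (.base (abv i j) true true s) (p i (j+1))) ∧
    (∃ s, D1 (p i j) (.base (abv i j) true false s) (p i (j+1)))) ∧
  (∀ i j, i < j → j ≤ m → j ≤ i + k →
    (∃ s, D2 (p i j) (.base (abv i j) false true s) (p (i+1) j)) ∧
    (∃ s, D1 (p i j) (.base (abv i j) false false s) (p (i+1) j)))

/-- Invariant for the lower (sub-diagonal) band of width `k`. -/
def SubInv {V : Type} (D1 D2 : DB V Sig) (u : ℕ → V) (m k : ℕ) (p : ℕ → ℕ → V) : Prop :=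
  (∀ i, p i i = u i) ∧
  (∀ i j, j < i → i ≤ m → i ≤ j + k →
    (∃ s, D2 (p i j) (.base (abv i j) true true s) (p i (j+1))) ∧
    (∃ s, D1 (p i j) (.base (abv i j) true false s) (p i (j+1)))) ∧
  (∀ i j, j ≤ i → i < m → i < j + k →
    (∃ s, D2 (p i j) (.base (abv i j) false true s) (p (i+1) j)) ∧
    (∃ s, D1 (p i j) (.base (abv i j) false false s) (p (i+1) j)))

section Steps
variable {V : Type} {S : Finset ℕ} {F : Finset ((Bool × ℕ) × (Bool × ℕ))}
variable {D1 D2 : DB V Sig} {x y : V} {m : ℕ} {u : ℕ → V} {p : ℕ → ℕ → V} {k : ℕ}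

theorem SupInv.v2 (h : SupInv D1 D2 u m k p) (h2 : labelsIn D2 (SigAlph S)) :
    SupVw S D2 p m k := fun i j a b c =>
  let ⟨s, e⟩ := (h.2.1 i j a b c).1; ⟨_, inSigma0_base (shade_mem h2 e), e⟩
theorem SupInv.v1 (h : SupInv D1 D2 u m k p) (h1 : labelsIn D1 (SigAlph S)) :
    SupVw S D1 p m k := fun i j a b c =>
  let ⟨s, e⟩ := (h.2.1 i j a b c).2; ⟨_, inSigma0_base (shade_mem h1 e), e⟩
theorem SupInv.h2 (h : SupInv D1 D2 u m k p) (h2 : labelsIn D2 (SigAlph S)) :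
    SupHw S D2 p m k := fun i j a b c =>
  let ⟨s, e⟩ := (h.2.2 i j a b c).1; ⟨_, inSigma0_base (shade_mem h2 e), e⟩
theorem SupInv.h1 (h : SupInv D1 D2 u m k p) (h1 : labelsIn D1 (SigAlph S)) :
    SupHw S D1 p m k := fun i j a b c =>
  let ⟨s, e⟩ := (h.2.2 i j a b c).2; ⟨_, inSigma0_base (shade_mem h1 e), e⟩

theorem SubInv.v2 (h : SubInv D1 D2 u m k p) (h2 : labelsIn D2 (SigAlph S)) :
    SubVw S D2 p m k := fun i j a b c =>
  let ⟨s, e⟩ := (h.2.1 i j a b c).1; ⟨_, inSigma0_base (shade_mem h2 e), e⟩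
theorem SubInv.v1 (h : SubInv D1 D2 u m k p) (h1 : labelsIn D1 (SigAlph S)) :
    SubVw S D1 p m k := fun i j a b c =>
  let ⟨s, e⟩ := (h.2.1 i j a b c).2; ⟨_, inSigma0_base (shade_mem h1 e), e⟩
theorem SubInv.h2 (h : SubInv D1 D2 u m k p) (h2 : labelsIn D2 (SigAlph S)) :
    SubHw S D2 p m k := fun i j a b c =>
  let ⟨s, e⟩ := (h.2.2 i j a b c).1; ⟨_, inSigma0_base (shade_mem h2 e), e⟩
theorem SubInv.h1 (h : SubInv D1 D2 u m k p) (h1 : labelsIn D1 (SigAlph S)) :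
    SubHw S D1 p m k := fun i j a b c =>
  let ⟨s, e⟩ := (h.2.2 i j a b c).2; ⟨_, inSigma0_base (shade_mem h1 e), e⟩

theorem sup_step
    (hag : ∀ L ∈ QQ S F, qry L D1 = qry L D2)
    (h1 : labelsIn D1 (SigAlph S)) (h2 : labelsIn D2 (SigAlph S))
    (hXa : D1 x .alpha (u 0)) (hXb : D2 x .beta (u 0))
    (hW1 : D1 (u m) .omega y) (hW2 : D2 (u m) .omega y)
    (hk : 1 ≤ k) (hs : SupInv D1 D2 u m k p) :
    (x, y) ∈ qry (Q0L S F) D2 ∨ ∃ p', SupInv D1 D2 u m (k+1) p' := by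
  classical
  by_cases hesc : (x, y) ∈ qry (Q0L S F) D2
  · exact Or.inl hesc
  right
  have hag' : ∀ L ∈ QQ S F, qry L D2 = qry L D1 := fun L hL => (hag L hL).symm
  obtain ⟨pd, pV, pH⟩ := hs
  have hsxx : SupInv D1 D2 u m k p := ⟨pd, pV, pH⟩
  have from2 : ∀ {i j}, i ≤ j → j ≤ m → j ≤ i + k →
      ∃ w, allS0 S w ∧ pathSat D2 (u 0) w (p i j) := by
    intro i j a b c
    have := sup_reach_from (hsxx.v2 h2) (hsxx.h2 h2) hk a b c
    rwa [pd 0] at this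
  have to2 : ∀ {i j}, i ≤ j → j ≤ m → j ≤ i + k →
      ∃ w, allS0 S w ∧ pathSat D2 (p i j) w (u m) := by
    intro i j a b c
    have := sup_reach_to (hsxx.v2 h2) (hsxx.h2 h2) hk a b c
    rwa [pd m] at this
  have from1 : ∀ {i j}, i ≤ j → j ≤ m → j ≤ i + k →
      ∃ w, allS0 S w ∧ pathSat D1 (u 0) w (p i j) := by
    intro i j a b c
    have := sup_reach_from (hsxx.v1 h1) (hsxx.h1 h1) hk a b c
    rwa [pd 0] at this
  have to1 : ∀ {i j}, i ≤ j → j ≤ m → j ≤ i + k →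
      ∃ w, allS0 S w ∧ pathSat D1 (p i j) w (u m) := by
    intro i j a b c
    have := sup_reach_to (hsxx.v1 h1) (hsxx.h1 h1) hk a b c
    rwa [pd m] at this
  have key : ∀ i, ∃ q, i + (k+1) ≤ m →
      (∃ s, D2 (p i (i+k)) (.base (abv i (i+k)) true true s) q) ∧
      (∃ s, D1 (p i (i+k)) (.base (abv i (i+k)) true false s) q) ∧
      (∃ s, D2 q (.base (abv i (i+k+1)) false true s) (p (i+1) (i+k+1))) ∧
      (∃ s, D1 q (.base (abv i (i+k+1)) false false s) (p (i+1) (i+k+1))) := by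
    intro i
    by_cases him : i + (k+1) ≤ m
    swap
    · exact ⟨u 0, fun h => absurd h him⟩
    obtain ⟨eH2, eH1⟩ := pH i (i+k) (by omega) (by omega) (by omega)
    obtain ⟨eV2, eV1⟩ := pV (i+1) (i+k) (by omega) (by omega) (by omega)
    have wfrom1 := from1 (i := i) (j := i+k) (by omega) (by omega) (by omega)
    have wto1 := to1 (i := i+1) (j := i+k+1) (by omega) (by omega) (by omega)
    have wfrom2 := from2 (i := i) (j := i+k) (by omega) (by omega) (by omega)
    have wto2 := to2 (i := i+1) (j := i+k+1) (by omega) (by omega) (by omega)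
    rcases Nat.even_or_odd k with ⟨t, rfl⟩ | ⟨t, rfl⟩
    · -- `k` even : cold right-up corner in `D₁`, transfer along `Q⁴`.
      have hA : abv i (i + (t+t)) = true := by simp only [abv, decide_eq_true_iff]; omega
      have hB : abv (i+1) (i + (t+t)) = false := by
        simp only [abv, decide_eq_false_iff_not]; omega
      have hB2 : abv i (i + (t+t) + 1) = false := by
        simp only [abv, decide_eq_false_iff_not]; omega
      obtain ⟨s1, e1⟩ := eH1; rw [hA] at e1
      obtain ⟨s2, e2⟩ := eV1; rw [hB] at e2
      obtain ⟨z', hz'⟩ := trans_Q4 hag (shade_mem h1 e1) (shade_mem h1 e2) e1 e2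
      rcases hz' with ⟨r1, hr1, r2, hr2, f1, f2⟩ | ⟨r1, hr1, r2, hr2, f1, f2⟩
      · -- cold pair also in `D₂` : escape via `Qugly2`
        obtain ⟨w1, hw1, hp1⟩ := wfrom2
        obtain ⟨w2, hw2, hp2⟩ := wto2
        exact absurd (escape_ugly2 h2 hXb hW2 hw1
          (allS0_cons (inSigma0_base (shade_mem h2 f2)) hw2) hp1 f1 ⟨_, f2, hp2⟩) hesc
      · -- warm pair in `D₂` : new grid point `z'`; now type its `D₁` companions
        obtain ⟨t1, r1', hr1', g1⟩ := trans_single hag' hr1 f1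
        obtain ⟨t2, r2', hr2', g2⟩ := trans_single hag' hr2 f2
        cases t1
        · cases t2
          · refine ⟨z', fun _ => ⟨⟨r1, by rw [hA]; exact f1⟩, ⟨r1', by rw [hA]; exact g1⟩,
              ⟨r2, by rw [hB2]; exact f2⟩, ⟨r2', by rw [hB2]; exact g2⟩⟩⟩
          · -- warm `D₁` horizontal companion : escape via `Qugly1`
            obtain ⟨w1, hw1, hp1⟩ := wfrom1
            obtain ⟨w2, hw2, hp2⟩ := wto1
            refine absurd (escape_ugly1 hag h1 hXa hW1
              (allS0_append hw1 (allS0_single (inSigma0_base (shade_mem h1 g1))))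
              hw2 ((pathSat_append w1).2 ⟨_, hp1, _, g1, rfl⟩) g2 hp2) hesc
        · -- warm `D₁` vertical companion : escape via `Qugly1`
          obtain ⟨w1, hw1, hp1⟩ := wfrom1
          obtain ⟨w2, hw2, hp2⟩ := wto1
          refine absurd (escape_ugly1 hag h1 hXa hW1 hw1
            (allS0_cons (inSigma0_base (shade_mem h1 g2)) hw2) hp1 g1 ⟨_, g2, hp2⟩) hesc
    · -- `k` odd : warm right-up corner in `D₂`, transfer along `Q³`.
      have hA : abv i (i + (2*t+1)) = false := by
        simp only [abv, decide_eq_false_iff_not]; omega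
      have hB : abv (i+1) (i + (2*t+1)) = true := by
        simp only [abv, decide_eq_true_iff]; omega
      have hB2 : abv i (i + (2*t+1) + 1) = true := by
        simp only [abv, decide_eq_true_iff]; omega
      obtain ⟨s1, e1⟩ := eH2; rw [hA] at e1
      obtain ⟨s2, e2⟩ := eV2; rw [hB] at e2
      obtain ⟨z', hz'⟩ := trans_Q3 hag' (shade_mem h2 e1) (shade_mem h2 e2) e1 e2
      rcases hz' with ⟨r1, hr1, r2, hr2, f1, f2⟩ | ⟨r1, hr1, r2, hr2, f1, f2⟩
      · -- warm pair also in `D₁` : escape via `Qugly1`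
        obtain ⟨w1, hw1, hp1⟩ := wfrom1
        obtain ⟨w2, hw2, hp2⟩ := wto1
        exact absurd (escape_ugly1 hag h1 hXa hW1 hw1
          (allS0_cons (inSigma0_base (shade_mem h1 f2)) hw2) hp1 f1 ⟨_, f2, hp2⟩) hesc
      · -- cold pair in `D₁` : new grid point `z'`; type its `D₂` companions
        obtain ⟨t1, r1', hr1', g1⟩ := trans_single hag hr1 f1
        obtain ⟨t2, r2', hr2', g2⟩ := trans_single hag hr2 f2
        cases t1
        · -- cold `D₂` vertical companion : escape via `Qugly2`
          obtain ⟨w1, hw1, hp1⟩ := wfrom2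
          obtain ⟨w2, hw2, hp2⟩ := wto2
          refine absurd (escape_ugly2 h2 hXb hW2 hw1
            (allS0_cons (inSigma0_base (shade_mem h2 g2)) hw2) hp1 g1 ⟨_, g2, hp2⟩) hesc
        · cases t2
          · -- cold `D₂` horizontal companion : escape via `Qugly2`
            obtain ⟨w1, hw1, hp1⟩ := wfrom2
            obtain ⟨w2, hw2, hp2⟩ := wto2
            refine absurd (escape_ugly2 h2 hXb hW2
              (allS0_append hw1 (allS0_single (inSigma0_base (shade_mem h2 g1))))
              hw2 ((pathSat_append w1).2 ⟨_, hp1, _, g1, rfl⟩) g2 hp2) hesc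
          · refine ⟨z', fun _ => ⟨⟨r1', by rw [hA]; exact g1⟩, ⟨r1, by rw [hA]; exact f1⟩,
              ⟨r2', by rw [hB2]; exact g2⟩, ⟨r2, by rw [hB2]; exact f2⟩⟩⟩
  choose mid hmid using key
  refine ⟨fun i j => if j = i + (k+1) then mid i else p i j, ?_, ?_, ?_⟩
  · intro i; simp only [if_neg (by omega : ¬ i = i + (k+1))]; exact pd i
  · intro i j hij hjm hb
    rcases Nat.lt_or_ge j (i + k) with hlt | hge
    · simp only [if_neg (by omega : ¬ j = i + (k+1)),
        if_neg (by omega : ¬ j + 1 = i + (k+1))]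
      exact pV i j hij hjm hlt
    · have hj : j = i + k := by omega
      subst hj
      simp only [if_neg (by omega : ¬ i + k = i + (k+1)),
        if_pos (by omega : i + k + 1 = i + (k+1))]
      obtain ⟨c1, c2, c3, c4⟩ := hmid i (by omega)
      exact ⟨c1, c2⟩
  · intro i j hij hjm hb
    rcases Nat.lt_or_ge (i + k) j with hlt | hge
    · have hj : j = i + (k+1) := by omega
      subst hj
      simp only [if_pos rfl, if_neg (by omega : ¬ i + (k+1) = i + 1 + (k+1))]
      obtain ⟨c1, c2, c3, c4⟩ := hmid i (by omega)
      have : i + (k+1) = i + k + 1 := by omega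
      rw [this]
      exact ⟨c3, c4⟩
    · simp only [if_neg (by omega : ¬ j = i + (k+1)),
        if_neg (by omega : ¬ j = i + 1 + (k+1))]
      exact pH i j hij hjm hge
end Steps
section Steps2
variable {V : Type} {S : Finset ℕ} {F : Finset ((Bool × ℕ) × (Bool × ℕ))}
variable {D1 D2 : DB V Sig} {x y : V} {m : ℕ} {u : ℕ → V} {p : ℕ → ℕ → V} {k : ℕ}

theorem sub_step
    (hag : ∀ L ∈ QQ S F, qry L D1 = qry L D2)
    (h1 : labelsIn D1 (SigAlph S)) (h2 : labelsIn D2 (SigAlph S))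
    (hXa : D1 x .alpha (u 0)) (hXb : D2 x .beta (u 0))
    (hW1 : D1 (u m) .omega y) (hW2 : D2 (u m) .omega y)
    (hk : 1 ≤ k) (hs : SubInv D1 D2 u m k p) :
    (x, y) ∈ qry (Q0L S F) D2 ∨ ∃ p', SubInv D1 D2 u m (k+1) p' := by
  classical
  by_cases hesc : (x, y) ∈ qry (Q0L S F) D2
  · exact Or.inl hesc
  right
  have hag' : ∀ L ∈ QQ S F, qry L D2 = qry L D1 := fun L hL => (hag L hL).symm
  obtain ⟨pd, pV, pH⟩ := hs
  have hsxx : SubInv D1 D2 u m k p := ⟨pd, pV, pH⟩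
  have from2 : ∀ {i j}, j ≤ i → i ≤ m → i ≤ j + k →
      ∃ w, allS0 S w ∧ pathSat D2 (u 0) w (p i j) := by
    intro i j a b c
    have := sub_reach_from (hsxx.v2 h2) (hsxx.h2 h2) hk a b c
    rwa [pd 0] at this
  have to2 : ∀ {i j}, j ≤ i → i ≤ m → i ≤ j + k →
      ∃ w, allS0 S w ∧ pathSat D2 (p i j) w (u m) := by
    intro i j a b c
    have := sub_reach_to (hsxx.v2 h2) (hsxx.h2 h2) hk a b c
    rwa [pd m] at this
  have from1 : ∀ {i j}, j ≤ i → i ≤ m → i ≤ j + k →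
      ∃ w, allS0 S w ∧ pathSat D1 (u 0) w (p i j) := by
    intro i j a b c
    have := sub_reach_from (hsxx.v1 h1) (hsxx.h1 h1) hk a b c
    rwa [pd 0] at this
  have to1 : ∀ {i j}, j ≤ i → i ≤ m → i ≤ j + k →
      ∃ w, allS0 S w ∧ pathSat D1 (p i j) w (u m) := by
    intro i j a b c
    have := sub_reach_to (hsxx.v1 h1) (hsxx.h1 h1) hk a b c
    rwa [pd m] at this
  have key : ∀ j, ∃ q, j + (k+1) ≤ m →
      (∃ s, D2 (p (j+k) j) (.base (abv (j+k) j) false true s) q) ∧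
      (∃ s, D1 (p (j+k) j) (.base (abv (j+k) j) false false s) q) ∧
      (∃ s, D2 q (.base (abv (j+k+1) j) true true s) (p (j+k+1) (j+1))) ∧
      (∃ s, D1 q (.base (abv (j+k+1) j) true false s) (p (j+k+1) (j+1))) := by
    intro j
    by_cases him : j + (k+1) ≤ m
    swap
    · exact ⟨u 0, fun h => absurd h him⟩
    obtain ⟨eV2, eV1⟩ := pV (j+k) j (by omega) (by omega) (by omega)
    obtain ⟨eH2, eH1⟩ := pH (j+k) (j+1) (by omega) (by omega) (by omega)
    have wfrom1 := from1 (i := j+k) (j := j) (by omega) (by omega) (by omega)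
    have wto1 := to1 (i := j+k+1) (j := j+1) (by omega) (by omega) (by omega)
    have wfrom2 := from2 (i := j+k) (j := j) (by omega) (by omega) (by omega)
    have wto2 := to2 (i := j+k+1) (j := j+1) (by omega) (by omega) (by omega)
    rcases Nat.even_or_odd k with ⟨t, rfl⟩ | ⟨t, rfl⟩
    · -- `k` even : warm up-right corner `[A V W][B H W]` in `D₂`, transfer along `Q⁴`.
      have hA : abv (j + (t+t)) j = true := by simp only [abv, decide_eq_true_iff]; omega
      have hB : abv (j + (t+t)) (j+1) = false := by
        simp only [abv, decide_eq_false_iff_not]; omega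
      have hB2 : abv (j + (t+t) + 1) j = false := by
        simp only [abv, decide_eq_false_iff_not]; omega
      obtain ⟨s1, e1⟩ := eV2; rw [hA] at e1
      obtain ⟨s2, e2⟩ := eH2; rw [hB] at e2
      obtain ⟨z', hz'⟩ := trans_Q4' hag' (shade_mem h2 e1) (shade_mem h2 e2) e1 e2
      rcases hz' with ⟨r1, hr1, r2, hr2, f1, f2⟩ | ⟨r1, hr1, r2, hr2, f1, f2⟩
      · -- cold right-up pair in `D₁` : new grid point `z'`; type its `D₂` companions
        obtain ⟨t1, r1', hr1', g1⟩ := trans_single hag hr1 f1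
        obtain ⟨t2, r2', hr2', g2⟩ := trans_single hag hr2 f2
        cases t1
        · -- cold `D₂` horizontal companion : escape via `Qugly2`
          obtain ⟨w1, hw1, hp1⟩ := wfrom2
          obtain ⟨w2, hw2, hp2⟩ := wto2
          refine absurd (escape_ugly2 h2 hXb hW2 hw1
            (allS0_cons (inSigma0_base (shade_mem h2 g2)) hw2) hp1 g1 ⟨_, g2, hp2⟩) hesc
        · cases t2
          · -- cold `D₂` vertical companion : escape via `Qugly2`
            obtain ⟨w1, hw1, hp1⟩ := wfrom2
            obtain ⟨w2, hw2, hp2⟩ := wto2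
            refine absurd (escape_ugly2 h2 hXb hW2
              (allS0_append hw1 (allS0_single (inSigma0_base (shade_mem h2 g1))))
              hw2 ((pathSat_append w1).2 ⟨_, hp1, _, g1, rfl⟩) g2 hp2) hesc
          · refine ⟨z', fun _ => ⟨⟨r1', by rw [hA]; exact g1⟩, ⟨r1, by rw [hA]; exact f1⟩,
              ⟨r2', by rw [hB2]; exact g2⟩, ⟨r2, by rw [hB2]; exact f2⟩⟩⟩
      · -- warm pair also in `D₁` : escape via `Qugly1`
        obtain ⟨w1, hw1, hp1⟩ := wfrom1
        obtain ⟨w2, hw2, hp2⟩ := wto1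
        exact absurd (escape_ugly1 hag h1 hXa hW1 hw1
          (allS0_cons (inSigma0_base (shade_mem h1 f2)) hw2) hp1 f1 ⟨_, f2, hp2⟩) hesc
    · -- `k` odd : cold up-right corner `[B V C][A H C]` in `D₁`, transfer along `Q³`.
      have hA : abv (j + (2*t+1)) j = false := by
        simp only [abv, decide_eq_false_iff_not]; omega
      have hB : abv (j + (2*t+1)) (j+1) = true := by
        simp only [abv, decide_eq_true_iff]; omega
      have hB2 : abv (j + (2*t+1) + 1) j = true := by
        simp only [abv, decide_eq_true_iff]; omega
      obtain ⟨s1, e1⟩ := eV1; rw [hA] at e1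
      obtain ⟨s2, e2⟩ := eH1; rw [hB] at e2
      obtain ⟨z', hz'⟩ := trans_Q3' hag (shade_mem h1 e1) (shade_mem h1 e2) e1 e2
      rcases hz' with ⟨r1, hr1, r2, hr2, f1, f2⟩ | ⟨r1, hr1, r2, hr2, f1, f2⟩
      · -- warm right-up pair in `D₂` : new grid point `z'`; type its `D₁` companions
        obtain ⟨t1, r1', hr1', g1⟩ := trans_single hag' hr1 f1
        obtain ⟨t2, r2', hr2', g2⟩ := trans_single hag' hr2 f2
        cases t1
        · cases t2
          · refine ⟨z', fun _ => ⟨⟨r1, by rw [hA]; exact f1⟩, ⟨r1', by rw [hA]; exact g1⟩,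
              ⟨r2, by rw [hB2]; exact f2⟩, ⟨r2', by rw [hB2]; exact g2⟩⟩⟩
          · -- warm `D₁` vertical companion : escape via `Qugly1`
            obtain ⟨w1, hw1, hp1⟩ := wfrom1
            obtain ⟨w2, hw2, hp2⟩ := wto1
            refine absurd (escape_ugly1 hag h1 hXa hW1
              (allS0_append hw1 (allS0_single (inSigma0_base (shade_mem h1 g1))))
              hw2 ((pathSat_append w1).2 ⟨_, hp1, _, g1, rfl⟩) g2 hp2) hesc
        · -- warm `D₁` horizontal companion : escape via `Qugly1`
          obtain ⟨w1, hw1, hp1⟩ := wfrom1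
          obtain ⟨w2, hw2, hp2⟩ := wto1
          refine absurd (escape_ugly1 hag h1 hXa hW1 hw1
            (allS0_cons (inSigma0_base (shade_mem h1 g2)) hw2) hp1 g1 ⟨_, g2, hp2⟩) hesc
      · -- cold pair also in `D₂` : escape via `Qugly2`
        obtain ⟨w1, hw1, hp1⟩ := wfrom2
        obtain ⟨w2, hw2, hp2⟩ := wto2
        exact absurd (escape_ugly2 h2 hXb hW2 hw1
          (allS0_cons (inSigma0_base (shade_mem h2 f2)) hw2) hp1 f1 ⟨_, f2, hp2⟩) hesc
  choose mid hmid using key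
  refine ⟨fun i j => if i = j + (k+1) then mid j else p i j, ?_, ?_, ?_⟩
  · intro i; simp only [if_neg (by omega : ¬ i = i + (k+1))]; exact pd i
  · intro i j hji him hb
    rcases Nat.lt_or_ge i (j + (k+1)) with hlt | hge
    · simp only [if_neg (by omega : ¬ i = j + (k+1)),
        if_neg (by omega : ¬ i = (j+1) + (k+1))]
      exact pV i j hji him (by omega)
    · have hi : i = j + (k+1) := by omega
      subst hi
      simp only [if_pos rfl, if_neg (by omega : ¬ j + (k+1) = (j+1) + (k+1))]
      obtain ⟨c1, c2, c3, c4⟩ := hmid j (by omega)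
      have : j + (k+1) = j + k + 1 := by omega
      rw [this]
      exact ⟨c3, c4⟩
  · intro i j hji him hb
    rcases Nat.lt_or_ge i (j + k) with hlt | hge
    · simp only [if_neg (by omega : ¬ i = j + (k+1)),
        if_neg (by omega : ¬ i + 1 = j + (k+1))]
      exact pH i j hji him hlt
    · have hi : i = j + k := by omega
      subst hi
      simp only [if_neg (by omega : ¬ j + k = j + (k+1)),
        if_pos (by omega : j + k + 1 = j + (k+1))]
      obtain ⟨c1, c2, c3, c4⟩ := hmid j (by omega)
      exact ⟨c1, c2⟩
end Steps2
section Base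
variable {V : Type} {S : Finset ℕ} {F : Finset ((Bool × ℕ) × (Bool × ℕ))}
variable {D1 D2 : DB V Sig} {x y : V} {m : ℕ} {u u' : ℕ → V}

/-- Direct escape via `Qugly1` witnessed in `D₂` itself. -/
theorem escape_ugly1_direct (h2 : labelsIn D2 (SigAlph S)) {v0 a b g : V}
    (ha : D2 x .alpha v0) (hw : D2 g .omega y)
    {w1 w2 : List Sig} (hw1 : allS0 S w1) (hw2 : allS0 S w2)
    (hp1 : pathSat D2 v0 w1 a) {ab d : Bool} {s : ℕ}
    (hc : D2 a (.base ab d true s) b) (hp2 : pathSat D2 b w2 g) :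
    (x, y) ∈ qry (Q0L S F) D2 := by
  refine ⟨Sig.alpha :: (w1 ++ (Sig.base ab d true s) :: (w2 ++ [Sig.omega])),
    Qugly1_le_Q0L ⟨w1, _, w2, hw1, hw2, inSigma0_base (shade_mem h2 hc), ⟨ab, d, s, rfl⟩, rfl⟩, ?_⟩
  exact ⟨v0, ha, (pathSat_append w1).2 ⟨a, hp1, b, hc,
    (pathSat_append w2).2 ⟨g, hp2, pathSat_single.2 hw⟩⟩⟩

theorem base_case
    (hag : ∀ L ∈ QQ S F, qry L D1 = qry L D2)
    (h1 : labelsIn D1 (SigAlph S)) (h2 : labelsIn D2 (SigAlph S))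
    (hm : 1 ≤ m)
    (hXa : D1 x .alpha (u 0)) (hW1 : D1 (u m) .omega y)
    (hch : ∀ i, i < m → (∃ s, D1 (u i) (.base true false false s) (u' i)) ∧
        (∃ s, D1 (u' i) (.base false true false s) (u (i+1)))) :
    (x, y) ∈ qry (Q0L S F) D2 ∨
    (D2 x .beta (u 0) ∧ D2 (u m) .omega y ∧
      (∃ p, SupInv D1 D2 u m 1 p) ∧ (∃ p, SubInv D1 D2 u m 1 p)) := by
  classical
  by_cases hesc : (x, y) ∈ qry (Q0L S F) D2
  · exact Or.inl hesc
  have hag' : ∀ L ∈ QQ S F, qry L D2 = qry L D1 := fun L hL => (hag L hL).symm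
  have hW2 : D2 (u m) .omega y := trans_omega hag hW1
  -- D₁ cold-chain walks
  have wseg1 : ∀ i, i < m → ∃ w, allS0 S w ∧ pathSat D1 (u i) w (u (i+1)) := by
    intro i him
    obtain ⟨⟨s, e1⟩, ⟨s', e2⟩⟩ := hch i him
    exact ⟨_, allS0_cons (inSigma0_base (shade_mem h1 e1))
        (allS0_single (inSigma0_base (shade_mem h1 e2))),
      ⟨_, e1, _, e2, rfl⟩⟩
  have walk1 : ∀ a b, a ≤ b → b ≤ m → ∃ w, allS0 S w ∧ pathSat D1 (u a) w (u b) := by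
    intro a b hab hbm
    induction b, hab using Nat.le_induction with
    | base => exact ⟨[], allS0_nil, rfl⟩
    | succ n hn ih => exact walk_trans (ih (by omega)) (wseg1 n (by omega))
  -- transfer of the `Q⁴` corners of the cold chain into `D₂`
  have hQ4 : ∀ i, ∃ z, i < m →
      (∃ s1, s1 ∈ S ∧ ∃ s2, s2 ∈ S ∧ D2 (u i) (.base true false false s1) z ∧
        D2 z (.base false true false s2) (u (i+1))) ∨
      (∃ s1, s1 ∈ S ∧ ∃ s2, s2 ∈ S ∧ D2 (u i) (.base true true true s1) z ∧
        D2 z (.base false false true s2) (u (i+1))) := by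
    intro i
    by_cases him : i < m
    swap
    · exact ⟨u 0, fun h => absurd h him⟩
    obtain ⟨⟨s, e1⟩, ⟨s', e2⟩⟩ := hch i him
    obtain ⟨z, hz⟩ := trans_Q4 hag (shade_mem h1 e1) (shade_mem h1 e2) e1 e2
    exact ⟨z, fun _ => by
      rcases hz with ⟨s1, a1, s2, a2, f1, f2⟩ | ⟨s1, a1, s2, a2, f1, f2⟩
      exacts [Or.inl ⟨s1, a1, s2, a2, f1, f2⟩, Or.inr ⟨s1, a1, s2, a2, f1, f2⟩]⟩
  choose zm hzm using hQ4
  -- D₂ chain walks (any temperature)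
  have wseg2 : ∀ i, i < m → ∃ w, allS0 S w ∧ pathSat D2 (u i) w (u (i+1)) := by
    intro i him
    rcases hzm i him with ⟨s1, a1, s2, a2, f1, f2⟩ | ⟨s1, a1, s2, a2, f1, f2⟩ <;>
      exact ⟨_, allS0_cons (inSigma0_base (shade_mem h2 f1))
          (allS0_single (inSigma0_base (shade_mem h2 f2))),
        ⟨_, f1, _, f2, rfl⟩⟩
  have walk2 : ∀ a b, a ≤ b → b ≤ m → ∃ w, allS0 S w ∧ pathSat D2 (u a) w (u b) := by
    intro a b hab hbm
    induction b, hab using Nat.le_induction with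
    | base => exact ⟨[], allS0_nil, rfl⟩
    | succ n hn ih => exact walk_trans (ih (by omega)) (wseg2 n (by omega))
  -- case analysis on the color of the initial edge of `D₂`
  rcases trans_alpha hag hXa with hA2 | hB2
  · -- `α` in `D₂` : always escape (via `Qstart` or `Qugly1`), contradiction
    exfalso
    apply hesc
    have hallcold : ∀ i, i < m → (∃ s1, s1 ∈ S ∧ ∃ s2, s2 ∈ S ∧
        D2 (u i) (.base true false false s1) (zm i) ∧
        D2 (zm i) (.base false true false s2) (u (i+1))) := by
      intro i him
      rcases hzm i him with h | ⟨s1, a1, s2, a2, f1, f2⟩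
      · exact h
      · -- a warm letter on an `α`-path : `Qugly1` in `D₂`
        exfalso
        apply hesc
        obtain ⟨w1, hw1, hp1⟩ := walk2 0 i (by omega) (by omega)
        obtain ⟨w2, hw2, hp2⟩ := walk2 (i+1) m (by omega) (by omega)
        exact escape_ugly1_direct h2 hA2 hW2 hw1
          (allS0_cons (inSigma0_base (shade_mem h2 f2)) hw2) hp1 f1 ⟨_, f2, hp2⟩
    -- all blocks cold : `Qstart` in `D₂`
    have build : ∀ n, n ≤ m → ∃ bl : List (List Sig), (∀ b ∈ bl, b ∈ startBlock S) ∧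
        bl.length = n ∧ pathSat D2 (u 0) bl.flatten (u n) := by
      intro n hnm
      induction n with
      | zero => exact ⟨[], by simp, rfl, rfl⟩
      | succ n ih =>
          obtain ⟨bl, hbl, hlen, hp⟩ := ih (by omega)
          obtain ⟨s1, a1, s2, a2, f1, f2⟩ := hallcold n (by omega)
          refine ⟨bl ++ [[.base true false false s1, .base false true false s2]], ?_, ?_, ?_⟩
          · intro b hb
            rcases List.mem_append.1 hb with hb | hb
            · exact hbl b hb
            · rw [List.mem_singleton] at hb
              subst hb
              exact ⟨_, _, rfl, ⟨s1, a1, rfl⟩, ⟨s2, a2, rfl⟩⟩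
          · simp [hlen]
          · rw [join_app]
            exact (pathSat_append _).2 ⟨u n, hp, by simp only [List.flatten_cons, List.flatten_nil, List.append_nil]; exact (⟨_, f1, _, f2, rfl⟩ : pathSat D2 (u n) [Sig.base true false false s1, Sig.base false true false s2] (u (n+1)))⟩
    obtain ⟨bl, hbl, hlen, hp⟩ := build m le_rfl
    refine ⟨Sig.alpha :: (bl.flatten ++ [Sig.omega]),
      Qstart_le_Q0L ⟨bl.flatten, Language.mem_kstar.2 ⟨bl, rfl, hbl⟩, ?_, rfl⟩, ?_⟩
    · intro hnil
      rw [join_nil_iff] at hnil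
      have hbne : bl ≠ [] := by
        intro h; rw [h] at hlen; simp at hlen; omega
      obtain ⟨b, hb⟩ := List.exists_mem_of_ne_nil bl hbne
      obtain ⟨c1, c2, hc, _, _⟩ := hbl b hb
      have := hnil b hb
      rw [hc] at this
      simp at this
    · exact ⟨u 0, hA2, (pathSat_append _).2 ⟨u m, hp, pathSat_single.2 hW2⟩⟩
  · -- `β` in `D₂`
    right
    refine ⟨hB2, hW2, ?_, ?_⟩
    · -- super band of width 1
      have warm : ∀ i, i < m → (∃ s1, s1 ∈ S ∧ ∃ s2, s2 ∈ S ∧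
          D2 (u i) (.base true true true s1) (zm i) ∧
          D2 (zm i) (.base false false true s2) (u (i+1))) := by
        intro i him
        rcases hzm i him with ⟨s1, a1, s2, a2, f1, f2⟩ | h
        · -- a cold letter on the `β`-path : `Qugly2`
          exfalso
          apply hesc
          obtain ⟨w1, hw1, hp1⟩ := walk2 0 i (by omega) (by omega)
          obtain ⟨w2, hw2, hp2⟩ := walk2 (i+1) m (by omega) (by omega)
          exact escape_ugly2 h2 hB2 hW2 hw1
            (allS0_cons (inSigma0_base (shade_mem h2 f2)) hw2) hp1 f1 ⟨_, f2, hp2⟩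
        · exact h
      -- cold companions in `D₁`
      have cold : ∀ i, i < m →
          (∃ s, D1 (u i) (.base true true false s) (zm i)) ∧
          (∃ s, D1 (zm i) (.base false false false s) (u (i+1))) := by
        intro i him
        obtain ⟨s1, a1, s2, a2, f1, f2⟩ := warm i him
        obtain ⟨t1, r1, hr1, g1⟩ := trans_single hag' a1 f1
        obtain ⟨t2, r2, hr2, g2⟩ := trans_single hag' a2 f2
        cases t1
        · cases t2
          · exact ⟨⟨r1, g1⟩, ⟨r2, g2⟩⟩
          · exfalso; apply hesc
            obtain ⟨w1, hw1, hp1⟩ := walk1 0 i (by omega) (by omega)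
            obtain ⟨w2, hw2, hp2⟩ := walk1 (i+1) m (by omega) (by omega)
            exact escape_ugly1 hag h1 hXa hW1
              (allS0_append hw1 (allS0_single (inSigma0_base (shade_mem h1 g1)))) hw2
              ((pathSat_append w1).2 ⟨_, hp1, _, g1, rfl⟩) g2 hp2
        · exfalso; apply hesc
          obtain ⟨w1, hw1, hp1⟩ := walk1 0 i (by omega) (by omega)
          obtain ⟨w2, hw2, hp2⟩ := walk1 (i+1) m (by omega) (by omega)
          exact escape_ugly1 hag h1 hXa hW1 hw1
            (allS0_cons (inSigma0_base (shade_mem h1 g2)) hw2) hp1 g1 ⟨_, g2, hp2⟩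
      refine ⟨fun i j => if j = i then u i else if j = i + 1 then zm i else u 0, ?_, ?_, ?_⟩
      · intro i; simp
      · intro i j hij hjm hb
        have hj : j = i := by omega
        subst hj
        simp only [if_pos rfl, if_neg (by omega : ¬ j + 1 = j), if_pos rfl]
        have hA : abv j j = true := by simp only [abv, decide_eq_true_iff]; omega
        rw [hA]
        obtain ⟨s1, a1, s2, a2, f1, f2⟩ := warm j hjm
        obtain ⟨c1, c2⟩ := cold j hjm
        exact ⟨⟨s1, f1⟩, c1⟩
      · intro i j hij hjm hb
        have hj : j = i + 1 := by omega
        subst hj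
        simp only [if_neg (by omega : ¬ i + 1 = i), if_pos rfl,
          if_pos rfl]
        have hB : abv i (i+1) = false := by simp only [abv, decide_eq_false_iff_not]; omega
        rw [hB]
        obtain ⟨s1, a1, s2, a2, f1, f2⟩ := warm i (by omega)
        obtain ⟨c1, c2⟩ := cold i (by omega)
        exact ⟨⟨s2, f2⟩, c2⟩
    · -- sub band of width 1
      have warm : ∀ i, i < m →
          (∃ s, D2 (u i) (.base true false true s) (u' i)) ∧
          (∃ s, D2 (u' i) (.base false true true s) (u (i+1))) := by
        intro i him
        obtain ⟨⟨s, e1⟩, ⟨s', e2⟩⟩ := hch i him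
        obtain ⟨t1, r1, hr1, g1⟩ := trans_single hag (shade_mem h1 e1) e1
        obtain ⟨t2, r2, hr2, g2⟩ := trans_single hag (shade_mem h1 e2) e2
        cases t1
        · exfalso; apply hesc
          obtain ⟨w1, hw1, hp1⟩ := walk2 0 i (by omega) (by omega)
          obtain ⟨w2, hw2, hp2⟩ := walk2 (i+1) m (by omega) (by omega)
          exact escape_ugly2 h2 hB2 hW2 hw1
            (allS0_cons (inSigma0_base (shade_mem h2 g2)) hw2) hp1 g1 ⟨_, g2, hp2⟩
        · cases t2
          · exfalso; apply hesc
            obtain ⟨w1, hw1, hp1⟩ := walk2 0 i (by omega) (by omega)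
            obtain ⟨w2, hw2, hp2⟩ := walk2 (i+1) m (by omega) (by omega)
            exact escape_ugly2 h2 hB2 hW2
              (allS0_append hw1 (allS0_single (inSigma0_base (shade_mem h2 g1)))) hw2
              ((pathSat_append w1).2 ⟨_, hp1, _, g1, rfl⟩) g2 hp2
          · exact ⟨⟨r1, g1⟩, ⟨r2, g2⟩⟩
      refine ⟨fun i j => if i = j then u i else if i = j + 1 then u' j else u 0, ?_, ?_, ?_⟩
      · intro i; simp
      · intro i j hji him hb
        have hi : i = j + 1 := by omega
        subst hi
        simp only [if_neg (by omega : ¬ j + 1 = j), if_pos rfl,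
          if_pos rfl]
        have hB : abv (j+1) j = false := by simp only [abv, decide_eq_false_iff_not]; omega
        rw [hB]
        obtain ⟨⟨s, e1⟩, ⟨s', e2⟩⟩ := hch j (by omega)
        obtain ⟨w1, w2⟩ := warm j (by omega)
        exact ⟨w2, ⟨s', e2⟩⟩
      · intro i j hji him hb
        have hi : i = j := by omega
        subst hi
        simp only [if_pos rfl, if_neg (by omega : ¬ i + 1 = i), if_pos rfl]
        have hA : abv i i = true := by simp only [abv, decide_eq_true_iff]; omega
        rw [hA]
        obtain ⟨⟨s, e1⟩, ⟨s', e2⟩⟩ := hch i him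
        obtain ⟨w1, w2⟩ := warm i him
        exact ⟨w1, ⟨s, e1⟩⟩
end Base
section Final
variable {V : Type} {S : Finset ℕ} {F : Finset ((Bool × ℕ) × (Bool × ℕ))}
variable {D1 D2 : DB V Sig} {x y : V} {m : ℕ} {u : ℕ → V} {psup psub : ℕ → ℕ → V}

theorem final_grid
    (h2 : labelsIn D2 (SigAlph S))
    (hXb : D2 x .beta (u 0)) (hW2 : D2 (u m) .omega y)
    (hm : 1 ≤ m)
    (hsup : SupInv D1 D2 u m m psup) (hsub : SubInv D1 D2 u m m psub) :
    (x, y) ∈ qry (Q0L S F) D2 ∨ GridSol S F := by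
  classical
  by_cases hesc : (x, y) ∈ qry (Q0L S F) D2
  · exact Or.inl hesc
  right
  obtain ⟨sd, sV, sH⟩ := hsup
  have hsupP : SupInv D1 D2 u m m psup := ⟨sd, sV, sH⟩
  obtain ⟨bd, bV, bH⟩ := hsub
  have hsubP : SubInv D1 D2 u m m psub := ⟨bd, bV, bH⟩
  set P : ℕ → ℕ → V := fun i j => if i ≤ j then psup i j else psub i j with hP
  have hPsup : ∀ i j, i ≤ j → P i j = psup i j := fun i j h => if_pos h
  have hPsub : ∀ i j, j < i → P i j = psub i j := fun i j h => if_neg (by omega)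
  have hdiag : ∀ i, P i i = u i := fun i => by rw [hPsup i i le_rfl]; exact sd i
  have eV : ∀ i j, i ≤ m → j < m →
      ∃ s, D2 (P i j) (.base (abv i j) true true s) (P i (j+1)) := by
    intro i j him hjm
    rcases le_or_gt i j with h | h
    · rw [hPsup i j h, hPsup i (j+1) (by omega)]
      exact (sV i j h hjm (by omega)).1
    · rw [hPsub i j h]
      rcases Nat.lt_or_ge (j+1) i with h2' | h2'
      · rw [hPsub i (j+1) h2']
        exact (bV i j h him (by omega)).1
      · have hij : i = j + 1 := by omega
        subst hij
        rw [hPsup (j+1) (j+1) le_rfl, sd (j+1), ← bd (j+1)]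
        exact (bV (j+1) j (by omega) him (by omega)).1
  have eH : ∀ i j, i < m → j ≤ m →
      ∃ s, D2 (P i j) (.base (abv i j) false true s) (P (i+1) j) := by
    intro i j him hjm
    rcases Nat.lt_or_ge i j with h | h
    · rw [hPsup i j (by omega), hPsup (i+1) j (by omega)]
      exact (sH i j h hjm (by omega)).1
    · rcases Nat.lt_or_ge j i with h' | h'
      · rw [hPsub i j h', hPsub (i+1) j (by omega)]
        exact (bH i j (by omega) him (by omega)).1
      · have hij : i = j := by omega
        subst hij
        rw [hPsub (i+1) i (by omega), hPsup i i le_rfl, sd i, ← bd i]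
        exact (bH i i le_rfl him (by omega)).1
  have Pfrom : ∀ i j, i ≤ m → j ≤ m →
      ∃ w, allS0 S w ∧ pathSat D2 (u 0) w (P i j) := by
    intro i j him hjm
    rcases le_or_gt i j with h | h
    · rw [hPsup i j h]
      have := sup_reach_from (m := m) (k := m) (hsupP.v2 h2) (hsupP.h2 h2) hm h hjm (by omega)
      rwa [sd 0] at this
    · rw [hPsub i j h]
      have := sub_reach_from (m := m) (k := m) (hsubP.v2 h2) (hsubP.h2 h2) hm (by omega : j ≤ i) him (by omega)
      rwa [bd 0] at this
  have Pto : ∀ i j, i ≤ m → j ≤ m →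
      ∃ w, allS0 S w ∧ pathSat D2 (P i j) w (u m) := by
    intro i j him hjm
    rcases le_or_gt i j with h | h
    · rw [hPsup i j h]
      have := sup_reach_to (m := m) (k := m) (hsupP.v2 h2) (hsupP.h2 h2) hm h hjm (by omega)
      rwa [sd m] at this
    · rw [hPsub i j h]
      have := sub_reach_to (m := m) (k := m) (hsubP.v2 h2) (hsubP.h2 h2) hm (by omega : j ≤ i) him (by omega)
      rwa [bd m] at this
  have eH' : ∀ i j, ∃ s, i < m → j ≤ m →
      D2 (P i j) (.base (abv i j) false true s) (P (i+1) j) := by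
    intro i j
    by_cases h : i < m ∧ j ≤ m
    · obtain ⟨s, hs⟩ := eH i j h.1 h.2
      exact ⟨s, fun _ _ => hs⟩
    · exact ⟨0, fun a b => absurd ⟨a, b⟩ h⟩
  have eV' : ∀ i j, ∃ s, i ≤ m → j < m →
      D2 (P i j) (.base (abv i j) true true s) (P i (j+1)) := by
    intro i j
    by_cases h : i ≤ m ∧ j < m
    · obtain ⟨s, hs⟩ := eV i j h.1 h.2
      exact ⟨s, fun _ _ => hs⟩
    · exact ⟨0, fun a b => absurd ⟨a, b⟩ h⟩
  choose hl hhl using eH'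
  choose vl hvl using eV'
  refine ⟨m, hm, hl, vl, ?_, ?_, ?_, ?_, ?_, ?_, ?_, ?_⟩
  · intro i j hi hj
    exact shade_mem h2 (hhl i j hi hj)
  · intro i j hi hj
    exact shade_mem h2 (hvl i j hi hj)
  · -- vl 0 0 = 0
    by_contra h0
    apply hesc
    have e := hvl 0 0 (by omega) (by omega)
    have hA : abv 0 0 = true := by simp [abv]
    rw [hA, hdiag 0] at e
    obtain ⟨w2, hw2, hp2⟩ := Pto 0 1 (by omega) (by omega)
    exact escape_bad1 hXb hW2 (shade_mem h2 e) h0 e hw2 hp2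
  · -- hl (m-1) m = 0
    by_contra h0
    apply hesc
    have e := hhl (m-1) m (by omega) le_rfl
    have hB : abv (m-1) m = false := by
      simp only [abv, decide_eq_false_iff_not]; omega
    have hmm : m - 1 + 1 = m := by omega
    rw [hB, hmm, hdiag m] at e
    obtain ⟨w1, hw1, hp1⟩ := Pfrom (m-1) m (by omega) le_rfl
    exact escape_bad2 hXb hW2 (shade_mem h2 e) h0 e hw1 hp1
  · -- no forbidden H-H pair
    intro i j hi hj hmem
    apply hesc
    have e1 := hhl i j (by omega) hj
    have e2 := hhl (i+1) j hi hj
    obtain ⟨w1, hw1, hp1⟩ := Pfrom i j (by omega) hj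
    obtain ⟨w2, hw2, hp2⟩ := Pto (i+1+1) j (by omega) hj
    exact escape_badF hXb hW2 hmem e1 e2 hw1 hw2 hp1 hp2
  · -- no forbidden H-V pair
    intro i j hi hj hmem
    apply hesc
    have e1 := hhl i j hi (by omega)
    have e2 := hvl (i+1) j (by omega) hj
    obtain ⟨w1, hw1, hp1⟩ := Pfrom i j (by omega) (by omega)
    obtain ⟨w2, hw2, hp2⟩ := Pto (i+1) (j+1) (by omega) (by omega)
    exact escape_badF hXb hW2 hmem e1 e2 hw1 hw2 hp1 hp2
  · -- no forbidden V-H pair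
    intro i j hi hj hmem
    apply hesc
    have e1 := hvl i j (by omega) hj
    have e2 := hhl i (j+1) hi (by omega)
    obtain ⟨w1, hw1, hp1⟩ := Pfrom i j (by omega) (by omega)
    obtain ⟨w2, hw2, hp2⟩ := Pto (i+1) (j+1) (by omega) (by omega)
    exact escape_badF hXb hW2 hmem e1 e2 hw1 hw2 hp1 hp2
  · -- no forbidden V-V pair
    intro i j hi hj hmem
    apply hesc
    have e1 := hvl i j hi (by omega)
    have e2 := hvl i (j+1) hi hj
    obtain ⟨w1, hw1, hp1⟩ := Pfrom i j (by omega) (by omega)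
    obtain ⟨w2, hw2, hp2⟩ := Pto i (j+1+1) (by omega) (by omega)
    exact escape_badF hXb hW2 hmem e1 e2 hw1 hw2 hp1 hp2
end Final
section Hard
variable {W : Type} {S : Finset ℕ} {F : Finset ((Bool × ℕ) × (Bool × ℕ))}

theorem chain_extract {D1 : DB W Sig} :
    ∀ bl : List (List Sig), (∀ b ∈ bl, b ∈ startBlock S) →
    ∀ v0 vm : W, pathSat D1 v0 bl.flatten vm →
    ∃ f g : ℕ → W, f 0 = v0 ∧ f bl.length = vm ∧
      ∀ i, i < bl.length →
        (∃ s, D1 (f i) (.base true false false s) (g i)) ∧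
        (∃ s, D1 (g i) (.base false true false s) (f (i+1))) := by
  intro bl
  induction bl with
  | nil =>
      intro _ v0 vm hp
      exact ⟨fun _ => v0, fun _ => v0, rfl, hp, fun i hi => absurd hi (by simp)⟩
  | cons b bs ih =>
      intro hbl v0 vm hp
      obtain ⟨v1, hpb, hrest⟩ := (pathSat_append b).1 hp
      obtain ⟨c1, c2, hb, ⟨s, hs, rfl⟩, ⟨s', hs', rfl⟩⟩ := hbl b (by simp)
      rw [hb] at hpb
      obtain ⟨z, e1, e2⟩ := pathSat_pair.1 hpb
      obtain ⟨f', g', hf0, hflen, hch⟩ :=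
        ih (fun b hb => hbl b (by simp [hb])) v1 vm hrest
      refine ⟨fun n => if n = 0 then v0 else f' (n-1),
        fun n => if n = 0 then z else g' (n-1), by simp, by simpa using hflen, ?_⟩
      intro i hi
      cases i with
      | zero =>
          constructor
          · exact ⟨s, by simpa using e1⟩
          · refine ⟨s', ?_⟩
            simpa [hf0] using e2
      | succ n =>
          obtain ⟨c1', c2'⟩ := hch n (by simpa using hi)
          constructor
          · simpa using c1'
          · simpa using c2'

theorem qstart_to_Q0 (hns : ¬ GridSol S F) {D1 D2 : DB W Sig}
    (h1 : labelsIn D1 (SigAlph S)) (h2 : labelsIn D2 (SigAlph S))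
    (hag : ∀ L ∈ QQ S F, qry L D1 = qry L D2) {a b : W}
    (h : (a, b) ∈ qry (Qstart S) D1) : (a, b) ∈ qry (Q0L S F) D2 := by
  obtain ⟨w, hw, hp⟩ := h
  obtain ⟨ub, hkst, hne, rfl⟩ := hw
  obtain ⟨bl, rfl, hbl⟩ := Language.mem_kstar.1 hkst
  obtain ⟨v0, hA, hrest⟩ := hp
  obtain ⟨vm, hjoin, homega⟩ := (pathSat_append _).1 hrest
  have hO : D1 vm .omega b := pathSat_single.1 homega
  obtain ⟨f, g, hf0, hflen, hch⟩ := chain_extract bl hbl v0 vm hjoin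
  have hm : 1 ≤ bl.length := by
    rcases bl with _ | ⟨c, bs⟩
    · simp at hne
    · simp
  rw [← hf0] at hA
  rw [← hflen] at hO
  rcases base_case hag h1 h2 hm hA hO hch with hesc | ⟨hB2, hW2, ⟨p1, hsup1⟩, ⟨p2, hsub1⟩⟩
  · exact hesc
  · have iter_sup : ∀ k, (a, b) ∈ qry (Q0L S F) D2 ∨
        ∃ p, SupInv D1 D2 f bl.length (k+1) p := by
      intro k
      induction k with
      | zero => exact Or.inr ⟨p1, hsup1⟩
      | succ n ih =>
          rcases ih with e | ⟨p, hp'⟩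
          · exact Or.inl e
          · exact sup_step hag h1 h2 hA hB2 hO hW2 (by omega) hp'
    have iter_sub : ∀ k, (a, b) ∈ qry (Q0L S F) D2 ∨
        ∃ p, SubInv D1 D2 f bl.length (k+1) p := by
      intro k
      induction k with
      | zero => exact Or.inr ⟨p2, hsub1⟩
      | succ n ih =>
          rcases ih with e | ⟨p, hp'⟩
          · exact Or.inl e
          · exact sub_step hag h1 h2 hA hB2 hO hW2 (by omega) hp'
    rcases iter_sup (bl.length - 1) with e | ⟨ps, hs⟩
    · exact e
    rcases iter_sub (bl.length - 1) with e | ⟨pb, hb'⟩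
    · exact e
    rw [Nat.sub_add_cancel hm] at hs hb'
    rcases final_grid h2 hB2 hW2 hm hs hb' with e | hgs
    · exact e
    · exact absurd hgs hns

theorem hard_dir {S : Finset ℕ} {F : Finset ((Bool × ℕ) × (Bool × ℕ))}
    (hns : ¬ GridSol S F) : DeterminesOn (SigAlph S) (QQ S F) (Q0L S F) := by
  intro V D1 D2 h1 h2 hag
  have main : ∀ E1 E2 : DB V Sig, labelsIn E1 (SigAlph S) → labelsIn E2 (SigAlph S) →
      (∀ L ∈ QQ S F, qry L E1 = qry L E2) →
      qry (Q0L S F) E1 ⊆ qry (Q0L S F) E2 := by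
    intro E1 E2 g1 g2 gag
    rintro ⟨a, b⟩ ⟨w, hw, hp⟩
    rcases mem_Q0L_iff.1 hw with h | h | h | h | h | h
    · exact qstart_to_Q0 hns g1 g2 gag ⟨w, h, hp⟩
    · have hq : (a, b) ∈ qry (Qbad1 S) E1 := ⟨w, h, hp⟩
      rw [gag _ mem_QQ_bad1] at hq
      exact qry_mono Qbad1_le_Q0L hq
    · have hq : (a, b) ∈ qry (Qbad2 S) E1 := ⟨w, h, hp⟩
      rw [gag _ mem_QQ_bad2] at hq
      exact qry_mono Qbad2_le_Q0L hq
    · obtain ⟨pp, hpF, hwp⟩ := h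
      have hq : (a, b) ∈ qry (QbadF S pp.1.1 pp.1.2 pp.2.1 pp.2.2) E1 := ⟨w, hwp, hp⟩
      rw [gag _ (mem_QQ_badF hpF)] at hq
      refine qry_mono (fun w' hw' => mem_Q0L_iff.2 ?_) hq
      exact Or.inr (Or.inr (Or.inr (Or.inl ⟨pp, hpF, hw'⟩)))
    · have hq : (a, b) ∈ qry (Qugly1 S) E1 := ⟨w, h, hp⟩
      rw [gag _ mem_QQ_ugly1] at hq
      exact qry_mono Qugly1_le_Q0L hq
    · have hq : (a, b) ∈ qry (Qugly2 S) E1 := ⟨w, h, hp⟩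
      rw [gag _ mem_QQ_ugly2] at hq
      exact qry_mono Qugly2_le_Q0L hq
  exact Set.Subset.antisymm (main D1 D2 h1 h2 hag)
    (main D2 D1 h2 h1 fun L hL => (hag L hL).symm)
end Hard
/-- Vertices of the counterexample structures: a source, a sink, and grid points. -/
inductive GV : Type where
  | X : GV
  | Y : GV
  | pt : ℕ → ℕ → GV
deriving DecidableEq

/-- The warm structure built from a grid solution : `β` into the grid corner,
the warm-labeled solution grid, and `ω` out of the opposite corner. -/
inductive DWarm (hl vl : ℕ → ℕ → ℕ) (m : ℕ) : GV → Sig → GV → Prop where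
  | beta : DWarm hl vl m .X .beta (.pt 0 0)
  | omega : DWarm hl vl m (.pt m m) .omega .Y
  | H (i j : ℕ) : i < m → j ≤ m →
      DWarm hl vl m (.pt i j) (.base (abv i j) false true (hl i j)) (.pt (i+1) j)
  | V (i j : ℕ) : i ≤ m → j < m →
      DWarm hl vl m (.pt i j) (.base (abv i j) true true (vl i j)) (.pt i (j+1))

/-- The cold structure : `α` into the corner, an all-black cold grid, and `ω` out. -/
inductive DCold (m : ℕ) : GV → Sig → GV → Prop where
  | alpha : DCold m .X .alpha (.pt 0 0)
  | omega : DCold m (.pt m m) .omega .Y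
  | H (i j : ℕ) : i < m → j ≤ m →
      DCold m (.pt i j) (.base (abv i j) false false 0) (.pt (i+1) j)
  | V (i j : ℕ) : i ≤ m → j < m →
      DCold m (.pt i j) (.base (abv i j) true false 0) (.pt i (j+1))

section Easy
variable {S : Finset ℕ} {F : Finset ((Bool × ℕ) × (Bool × ℕ))}
variable {m : ℕ} {hl vl : ℕ → ℕ → ℕ}

theorem warm_label {a c b} (h : DWarm hl vl m a c b) :
    c = .beta ∨ c = .omega ∨ ∃ p q s, c = .base p q true s := by
  cases h
  · exact Or.inl rfl
  · exact Or.inr (Or.inl rfl)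
  · exact Or.inr (Or.inr ⟨_, _, _, rfl⟩)
  · exact Or.inr (Or.inr ⟨_, _, _, rfl⟩)

theorem cold_label {a c b} (h : DCold m a c b) :
    c = .alpha ∨ c = .omega ∨ ∃ p q s, c = .base p q false s := by
  cases h
  · exact Or.inl rfl
  · exact Or.inr (Or.inl rfl)
  · exact Or.inr (Or.inr ⟨_, _, _, rfl⟩)
  · exact Or.inr (Or.inr ⟨_, _, _, rfl⟩)

theorem warm_labelsIn (hS : 0 ∈ S)
    (hlS : ∀ i j, i < m → j ≤ m → hl i j ∈ S)
    (vlS : ∀ i j, i ≤ m → j < m → vl i j ∈ S) :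
    labelsIn (DWarm hl vl m) (SigAlph S) := by
  intro a c b h
  cases h with
  | beta => exact Or.inl (by simp)
  | omega => exact Or.inl (by simp)
  | H i j hi hj => exact Or.inr (by simpa [inSigma0] using hlS i j hi hj)
  | V i j hi hj => exact Or.inr (by simpa [inSigma0] using vlS i j hi hj)

theorem cold_labelsIn (hS : 0 ∈ S) : labelsIn (DCold m) (SigAlph S) := by
  intro a c b h
  cases h with
  | alpha => exact Or.inl (by simp)
  | omega => exact Or.inl (by simp)
  | H i j hi hj => exact Or.inr (by simpa [inSigma0] using hS)
  | V i j hi hj => exact Or.inr (by simpa [inSigma0] using hS)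

/-- No word containing a letter outside the structure's labels can be satisfied. -/
theorem no_alpha_warm {a b w} (hw : Sig.alpha ∈ w) (hp : pathSat (DWarm hl vl m) a w b) :
    False := by
  obtain ⟨_, _, h⟩ := pathSat_letters hp _ hw
  rcases warm_label h with h' | h' | ⟨p, q, s, h'⟩ <;> simp at h'

theorem no_beta_cold {a b w} (hw : Sig.beta ∈ w) (hp : pathSat (DCold m) a w b) :
    False := by
  obtain ⟨_, _, h⟩ := pathSat_letters hp _ hw
  rcases cold_label h with h' | h' | ⟨p, q, s, h'⟩ <;> simp at h'

theorem no_cold_warm {a b w p q s} (hw : Sig.base p q false s ∈ w)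
    (hp : pathSat (DWarm hl vl m) a w b) : False := by
  obtain ⟨_, _, h⟩ := pathSat_letters hp _ hw
  rcases warm_label h with h' | h' | ⟨p', q', s', h'⟩ <;> simp_all

theorem no_warm_cold {a b w p q s} (hw : Sig.base p q true s ∈ w)
    (hp : pathSat (DCold m) a w b) : False := by
  obtain ⟨_, _, h⟩ := pathSat_letters hp _ hw
  rcases cold_label h with h' | h' | ⟨p', q', s', h'⟩ <;> simp_all

end Easy
section Easy2
variable {S : Finset ℕ} {F : Finset ((Bool × ℕ) × (Bool × ℕ))}
variable {m : ℕ} {hl vl : ℕ → ℕ → ℕ}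

theorem abv_true_iff {i j : ℕ} : abv i j = true ↔ (i + j) % 2 = 0 := by
  simp [abv]

theorem abv_false_iff {i j : ℕ} : abv i j = false ↔ ¬ (i + j) % 2 = 0 := by
  simp [abv]

theorem warm_inv {a c b} (h : DWarm hl vl m a c b) :
    (a = .X ∧ c = .beta ∧ b = .pt 0 0) ∨
    (a = .pt m m ∧ c = .omega ∧ b = .Y) ∨
    (∃ i j, i < m ∧ j ≤ m ∧ a = .pt i j ∧
      c = .base (abv i j) false true (hl i j) ∧ b = .pt (i+1) j) ∨
    (∃ i j, i ≤ m ∧ j < m ∧ a = .pt i j ∧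
      c = .base (abv i j) true true (vl i j) ∧ b = .pt i (j+1)) := by
  cases h with
  | beta => exact Or.inl ⟨rfl, rfl, rfl⟩
  | omega => exact Or.inr (Or.inl ⟨rfl, rfl, rfl⟩)
  | H i j hi hj => exact Or.inr (Or.inr (Or.inl ⟨i, j, hi, hj, rfl, rfl, rfl⟩))
  | V i j hi hj => exact Or.inr (Or.inr (Or.inr ⟨i, j, hi, hj, rfl, rfl, rfl⟩))

theorem cold_inv {a c b} (h : DCold m a c b) :
    (a = .X ∧ c = .alpha ∧ b = .pt 0 0) ∨
    (a = .pt m m ∧ c = .omega ∧ b = .Y) ∨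
    (∃ i j, i < m ∧ j ≤ m ∧ a = .pt i j ∧
      c = .base (abv i j) false false 0 ∧ b = .pt (i+1) j) ∨
    (∃ i j, i ≤ m ∧ j < m ∧ a = .pt i j ∧
      c = .base (abv i j) true false 0 ∧ b = .pt i (j+1)) := by
  cases h with
  | alpha => exact Or.inl ⟨rfl, rfl, rfl⟩
  | omega => exact Or.inr (Or.inl ⟨rfl, rfl, rfl⟩)
  | H i j hi hj => exact Or.inr (Or.inr (Or.inl ⟨i, j, hi, hj, rfl, rfl, rfl⟩))
  | V i j hi hj => exact Or.inr (Or.inr (Or.inr ⟨i, j, hi, hj, rfl, rfl, rfl⟩))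

theorem q1_eq : qry Qg1 (DWarm hl vl m) = qry Qg1 (DCold m) := by
  ext ⟨a, b⟩
  constructor
  · rintro ⟨w, hw, hp⟩
    have hww : w = [Sig.omega] := hw
    subst hww
    have h := pathSat_single.1 hp
    rcases warm_inv h with ⟨ha, hc, hb⟩ | ⟨ha, hc, hb⟩ | ⟨i, j, _, _, _, hc, _⟩ |
      ⟨i, j, _, _, _, hc, _⟩ <;> try simp at hc
    subst ha; subst hb
    exact ⟨[Sig.omega], rfl, pathSat_single.2 DCold.omega⟩
  · rintro ⟨w, hw, hp⟩
    have hww : w = [Sig.omega] := hw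
    subst hww
    have h := pathSat_single.1 hp
    rcases cold_inv h with ⟨ha, hc, hb⟩ | ⟨ha, hc, hb⟩ | ⟨i, j, _, _, _, hc, _⟩ |
      ⟨i, j, _, _, _, hc, _⟩ <;> try simp at hc
    subst ha; subst hb
    exact ⟨[Sig.omega], rfl, pathSat_single.2 DWarm.omega⟩

theorem q2_eq : qry Qg2 (DWarm hl vl m) = qry Qg2 (DCold m) := by
  ext ⟨a, b⟩
  constructor
  · rintro ⟨w, hw, hp⟩
    rcases hw with hw | hw
    · subst hw
      exact (no_alpha_warm (by simp) hp).elim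
    · replace hw : w = [Sig.beta] := hw
      subst hw
      have h := pathSat_single.1 hp
      rcases warm_inv h with ⟨ha, hc, hb⟩ | ⟨ha, hc, hb⟩ | ⟨i, j, _, _, _, hc, _⟩ |
        ⟨i, j, _, _, _, hc, _⟩ <;> try simp at hc
      subst ha; subst hb
      exact ⟨[Sig.alpha], Or.inl rfl, pathSat_single.2 DCold.alpha⟩
  · rintro ⟨w, hw, hp⟩
    rcases hw with hw | hw
    · subst hw
      have h := pathSat_single.1 hp
      rcases cold_inv h with ⟨ha, hc, hb⟩ | ⟨ha, hc, hb⟩ | ⟨i, j, _, _, _, hc, _⟩ |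
        ⟨i, j, _, _, _, hc, _⟩ <;> try simp at hc
      subst ha; subst hb
      exact ⟨[Sig.beta], Or.inr rfl, pathSat_single.2 DWarm.beta⟩
    · replace hw : w = [Sig.beta] := hw
      subst hw
      exact (no_beta_cold (by simp) hp).elim
end Easy2
def Qsing (S : Finset ℕ) (AB DIR t : Bool) : Language Sig :=
  { w | ∃ c, w = [c] ∧ isL S AB DIR t c }

section Easy3
variable {S : Finset ℕ} {F : Finset ((Bool × ℕ) × (Bool × ℕ))}
variable {m : ℕ} {hl vl : ℕ → ℕ → ℕ}

/-- A generic single-letter language. -/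
theorem single_pairs_warm {a b : GV} {AB DIR t : Bool} {s : ℕ}
    (hp : pathSat (DWarm hl vl m) a [.base AB DIR t s] b) :
    ∃ i j, a = .pt i j ∧ AB = abv i j ∧ t = true ∧
      ((DIR = false ∧ i < m ∧ j ≤ m ∧ b = .pt (i+1) j ∧ s = hl i j) ∨
       (DIR = true ∧ i ≤ m ∧ j < m ∧ b = .pt i (j+1) ∧ s = vl i j)) := by
  have h := pathSat_single.1 hp
  rcases warm_inv h with ⟨ha, hc, hb⟩ | ⟨ha, hc, hb⟩ | ⟨i, j, hi, hj, ha, hc, hb⟩ |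
    ⟨i, j, hi, hj, ha, hc, hb⟩
  · simp at hc
  · simp at hc
  · rw [Sig.base.injEq] at hc
    obtain ⟨e1, e2, e3, e4⟩ := hc
    exact ⟨i, j, ha, e1, e3, Or.inl ⟨e2, hi, hj, hb, e4⟩⟩
  · rw [Sig.base.injEq] at hc
    obtain ⟨e1, e2, e3, e4⟩ := hc
    exact ⟨i, j, ha, e1, e3, Or.inr ⟨e2, hi, hj, hb, e4⟩⟩

theorem single_pairs_cold {a b : GV} {AB DIR t : Bool} {s : ℕ}
    (hp : pathSat (DCold m) a [.base AB DIR t s] b) :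
    ∃ i j, a = .pt i j ∧ AB = abv i j ∧ t = false ∧ s = 0 ∧
      ((DIR = false ∧ i < m ∧ j ≤ m ∧ b = .pt (i+1) j) ∨
       (DIR = true ∧ i ≤ m ∧ j < m ∧ b = .pt i (j+1))) := by
  have h := pathSat_single.1 hp
  rcases cold_inv h with ⟨ha, hc, hb⟩ | ⟨ha, hc, hb⟩ | ⟨i, j, hi, hj, ha, hc, hb⟩ |
    ⟨i, j, hi, hj, ha, hc, hb⟩
  · simp at hc
  · simp at hc
  · rw [Sig.base.injEq] at hc
    obtain ⟨e1, e2, e3, e4⟩ := hc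
    exact ⟨i, j, ha, e1, e3, e4, Or.inl ⟨e2, hi, hj, hb⟩⟩
  · rw [Sig.base.injEq] at hc
    obtain ⟨e1, e2, e3, e4⟩ := hc
    exact ⟨i, j, ha, e1, e3, e4, Or.inr ⟨e2, hi, hj, hb⟩⟩

/-- Generic agreement for the single-letter good queries. -/
theorem single_eq (hS : 0 ∈ S)
    (hlS : ∀ i j, i < m → j ≤ m → hl i j ∈ S)
    (vlS : ∀ i j, i ≤ m → j < m → vl i j ∈ S) (AB DIR : Bool) :
    qry (Qsing S AB DIR true + Qsing S AB DIR false) (DWarm hl vl m) =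
    qry (Qsing S AB DIR true + Qsing S AB DIR false) (DCold m) := by
  ext ⟨a, b⟩
  constructor
  · rintro ⟨w, hw, hp⟩
    have hex : ∃ t s, s ∈ S ∧ w = [Sig.base AB DIR t s] := by
      rcases hw with ⟨c, rfl, s, hs, rfl⟩ | ⟨c, rfl, s, hs, rfl⟩
      exacts [⟨true, s, hs, rfl⟩, ⟨false, s, hs, rfl⟩]
    obtain ⟨t, s, hs, rfl⟩ := hex
    obtain ⟨i, j, ha, hab, ht, hrest⟩ := single_pairs_warm hp
    subst ha
    rcases hrest with ⟨hd, hi, hj, hb, _⟩ | ⟨hd, hi, hj, hb, _⟩ <;> subst hd <;> subst hb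
    · refine ⟨[Sig.base AB false false 0], Or.inr ⟨_, rfl, 0, hS, by rw [hab]⟩,
        pathSat_single.2 ?_⟩
      rw [hab]
      exact DCold.H i j hi hj
    · refine ⟨[Sig.base AB true false 0], Or.inr ⟨_, rfl, 0, hS, by rw [hab]⟩,
        pathSat_single.2 ?_⟩
      rw [hab]
      exact DCold.V i j hi hj
  · rintro ⟨w, hw, hp⟩
    have hex : ∃ t s, s ∈ S ∧ w = [Sig.base AB DIR t s] := by
      rcases hw with ⟨c, rfl, s, hs, rfl⟩ | ⟨c, rfl, s, hs, rfl⟩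
      exacts [⟨true, s, hs, rfl⟩, ⟨false, s, hs, rfl⟩]
    obtain ⟨t, s, hs, rfl⟩ := hex
    obtain ⟨i, j, ha, hab, ht, hs0, hrest⟩ := single_pairs_cold hp
    subst ha
    rcases hrest with ⟨hd, hi, hj, hb⟩ | ⟨hd, hi, hj, hb⟩ <;> subst hd <;> subst hb
    · refine ⟨[Sig.base AB false true (hl i j)], Or.inl ⟨_, rfl, hl i j, hlS i j hi hj,
        by rw [hab]⟩, pathSat_single.2 ?_⟩
      rw [hab]
      exact DWarm.H i j hi hj
    · refine ⟨[Sig.base AB true true (vl i j)], Or.inl ⟨_, rfl, vl i j, vlS i j hi hj,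
        by rw [hab]⟩, pathSat_single.2 ?_⟩
      rw [hab]
      exact DWarm.V i j hi hj
end Easy3
section Easy4
variable {S : Finset ℕ} {F : Finset ((Bool × ℕ) × (Bool × ℕ))}
variable {m : ℕ} {hl vl : ℕ → ℕ → ℕ}

theorem qry_add_comm {W γ : Type} (L M : Language γ) (D : DB W γ) :
    qry (L + M) D = qry (M + L) D := by
  ext ⟨a, b⟩
  constructor <;> rintro ⟨w, hw, hp⟩ <;> rcases hw with h | h
  exacts [⟨w, Or.inr h, hp⟩, ⟨w, Or.inl h, hp⟩, ⟨w, Or.inr h, hp⟩, ⟨w, Or.inl h, hp⟩]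

theorem q4_eq (hS : 0 ∈ S)
    (hlS : ∀ i j, i < m → j ≤ m → hl i j ∈ S)
    (vlS : ∀ i j, i ≤ m → j < m → vl i j ∈ S) :
    qry (Qg4a S + Qg4b S) (DWarm hl vl m) = qry (Qg4a S + Qg4b S) (DCold m) := by
  ext ⟨a, b⟩
  constructor
  · rintro ⟨w, hw, hp⟩
    rcases hw with hw | hw
    · obtain ⟨s, hs, s', hs', rfl⟩ := mem_block_iff.1 hw
      exact (no_cold_warm (List.mem_cons_self) hp).elim
    · obtain ⟨s, hs, s', hs', rfl⟩ := mem_block_iff.1 hw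
      obtain ⟨z, e1, e2⟩ := pathSat_pair.1 hp
      rcases warm_inv e1 with ⟨_, hc, _⟩ | ⟨_, hc, _⟩ | ⟨i, j, hi, hj, ha, hc, hb⟩ |
        ⟨i, j, hi, hj, ha, hc, hb⟩
      · simp at hc
      · simp at hc
      · simp at hc
      rw [Sig.base.injEq] at hc
      obtain ⟨hab, -, -, -⟩ := hc
      replace hab := hab.symm
      rcases warm_inv e2 with ⟨hz, hc', _⟩ | ⟨hz, hc', _⟩ | ⟨i', j', hi', hj', hz, hc', hb'⟩ |
        ⟨i', j', hi', hj', hz, hc', hb'⟩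
      · simp at hc'
      · simp at hc'
      swap
      · simp at hc'
      rw [hb] at hz
      rw [GV.pt.injEq] at hz
      obtain ⟨rfl, rfl⟩ := hz
      subst ha; subst hb'
      have habf : abv (i+1) j = false := by
        rw [abv_false_iff]; rw [abv_true_iff] at hab; omega
      refine ⟨[Sig.base true false false 0, Sig.base false true false 0],
        Or.inl (mem_block_iff.2 ⟨0, hS, 0, hS, rfl⟩),
        pathSat_pair.2 ⟨.pt (i+1) j, ?_, ?_⟩⟩
      · have := DCold.H (m := m) i j hi' (by omega)
        rwa [hab] at this
      · have := DCold.V (m := m) (i+1) j (by omega) hj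
        rwa [habf] at this
  · rintro ⟨w, hw, hp⟩
    rcases hw with hw | hw
    swap
    · obtain ⟨s, hs, s', hs', rfl⟩ := mem_block_iff.1 hw
      exact (no_warm_cold (List.mem_cons_self) hp).elim
    · obtain ⟨s, hs, s', hs', rfl⟩ := mem_block_iff.1 hw
      obtain ⟨z, e1, e2⟩ := pathSat_pair.1 hp
      rcases cold_inv e1 with ⟨_, hc, _⟩ | ⟨_, hc, _⟩ | ⟨i, j, hi, hj, ha, hc, hb⟩ |
        ⟨i, j, hi, hj, ha, hc, hb⟩
      · simp at hc
      · simp at hc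
      swap
      · simp at hc
      rw [Sig.base.injEq] at hc
      obtain ⟨hab, -, -, -⟩ := hc
      replace hab := hab.symm
      rcases cold_inv e2 with ⟨hz, hc', _⟩ | ⟨hz, hc', _⟩ | ⟨i', j', hi', hj', hz, hc', hb'⟩ |
        ⟨i', j', hi', hj', hz, hc', hb'⟩
      · simp at hc'
      · simp at hc'
      · simp at hc'
      rw [hb] at hz
      rw [GV.pt.injEq] at hz
      obtain ⟨rfl, rfl⟩ := hz
      subst ha; subst hb'
      have habf : abv i (j+1) = false := by
        rw [abv_false_iff]; rw [abv_true_iff] at hab; omega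
      refine ⟨[Sig.base true true true (vl i j), Sig.base false false true (hl i (j+1))],
        Or.inr (mem_block_iff.2 ⟨vl i j, vlS i j (by omega) hj', hl i (j+1),
          hlS i (j+1) hi (by omega), rfl⟩),
        pathSat_pair.2 ⟨.pt i (j+1), ?_, ?_⟩⟩
      · have := DWarm.V (hl := hl) (vl := vl) (m := m) i j (by omega) hj'
        rwa [hab] at this
      · have := DWarm.H (hl := hl) (vl := vl) (m := m) i (j+1) hi (by omega)
        rwa [habf] at this

theorem q3_eq (hS : 0 ∈ S)
    (hlS : ∀ i j, i < m → j ≤ m → hl i j ∈ S)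
    (vlS : ∀ i j, i ≤ m → j < m → vl i j ∈ S) :
    qry (Qg3a S + Qg3b S) (DWarm hl vl m) = qry (Qg3a S + Qg3b S) (DCold m) := by
  ext ⟨a, b⟩
  constructor
  · rintro ⟨w, hw, hp⟩
    rcases hw with hw | hw
    swap
    · obtain ⟨s, hs, s', hs', rfl⟩ := mem_block_iff.1 hw
      exact (no_cold_warm (List.mem_cons_self) hp).elim
    · obtain ⟨s, hs, s', hs', rfl⟩ := mem_block_iff.1 hw
      obtain ⟨z, e1, e2⟩ := pathSat_pair.1 hp
      rcases warm_inv e1 with ⟨_, hc, _⟩ | ⟨_, hc, _⟩ | ⟨i, j, hi, hj, ha, hc, hb⟩ |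
        ⟨i, j, hi, hj, ha, hc, hb⟩
      · simp at hc
      · simp at hc
      swap
      · simp at hc
      rw [Sig.base.injEq] at hc
      obtain ⟨hab, -, -, -⟩ := hc
      replace hab := hab.symm
      rcases warm_inv e2 with ⟨hz, hc', _⟩ | ⟨hz, hc', _⟩ | ⟨i', j', hi', hj', hz, hc', hb'⟩ |
        ⟨i', j', hi', hj', hz, hc', hb'⟩
      · simp at hc'
      · simp at hc'
      · simp at hc'
      rw [hb] at hz
      rw [GV.pt.injEq] at hz
      obtain ⟨rfl, rfl⟩ := hz
      subst ha; subst hb'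
      have habt : abv i (j+1) = true := by
        rw [abv_true_iff]; rw [abv_false_iff] at hab; omega
      refine ⟨[Sig.base false true false 0, Sig.base true false false 0],
        Or.inr (mem_block_iff.2 ⟨0, hS, 0, hS, rfl⟩),
        pathSat_pair.2 ⟨.pt i (j+1), ?_, ?_⟩⟩
      · have := DCold.V (m := m) i j (by omega) hj'
        rwa [hab] at this
      · have := DCold.H (m := m) i (j+1) hi (by omega)
        rwa [habt] at this
  · rintro ⟨w, hw, hp⟩
    rcases hw with hw | hw
    · obtain ⟨s, hs, s', hs', rfl⟩ := mem_block_iff.1 hw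
      exact (no_warm_cold (List.mem_cons_self) hp).elim
    · obtain ⟨s, hs, s', hs', rfl⟩ := mem_block_iff.1 hw
      obtain ⟨z, e1, e2⟩ := pathSat_pair.1 hp
      rcases cold_inv e1 with ⟨_, hc, _⟩ | ⟨_, hc, _⟩ | ⟨i, j, hi, hj, ha, hc, hb⟩ |
        ⟨i, j, hi, hj, ha, hc, hb⟩
      · simp at hc
      · simp at hc
      · simp at hc
      rw [Sig.base.injEq] at hc
      obtain ⟨hab, -, -, -⟩ := hc
      replace hab := hab.symm
      rcases cold_inv e2 with ⟨hz, hc', _⟩ | ⟨hz, hc', _⟩ | ⟨i', j', hi', hj', hz, hc', hb'⟩ |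
        ⟨i', j', hi', hj', hz, hc', hb'⟩
      · simp at hc'
      · simp at hc'
      swap
      · simp at hc'
      rw [hb] at hz
      rw [GV.pt.injEq] at hz
      obtain ⟨rfl, rfl⟩ := hz
      subst ha; subst hb'
      have habt : abv (i+1) j = true := by
        rw [abv_true_iff]; rw [abv_false_iff] at hab; omega
      refine ⟨[Sig.base false false true (hl i j), Sig.base true true true (vl (i+1) j)],
        Or.inl (mem_block_iff.2 ⟨hl i j, hlS i j hi' (by omega), vl (i+1) j,
          vlS (i+1) j (by omega) hj, rfl⟩),
        pathSat_pair.2 ⟨.pt (i+1) j, ?_, ?_⟩⟩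
      · have := DWarm.H (hl := hl) (vl := vl) (m := m) i j hi' (by omega)
        rwa [hab] at this
      · have := DWarm.V (hl := hl) (vl := vl) (m := m) (i+1) j (by omega) hj
        rwa [habt] at this
end Easy4
section Easy5
variable {S : Finset ℕ} {F : Finset ((Bool × ℕ) × (Bool × ℕ))}
variable {m : ℕ} {hl vl : ℕ → ℕ → ℕ}

theorem qry_eq_of_empty {W : Type} {L : Language Sig} {DA DB' : DB W Sig}
    (hA : ∀ a b : W, (a, b) ∈ qry L DA → False)
    (hB : ∀ a b : W, (a, b) ∈ qry L DB' → False) : qry L DA = qry L DB' := by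
  ext ⟨a, b⟩
  exact ⟨fun h => (hA a b h).elim, fun h => (hB a b h).elim⟩

theorem ugly1_warm_empty {a b : GV} (h : (a, b) ∈ qry (Qugly1 S) (DWarm hl vl m)) :
    False := by
  obtain ⟨w, ⟨u, c, u', _, _, _, _, rfl⟩, hp⟩ := h
  exact no_alpha_warm (by simp) hp

theorem ugly1_cold_empty {a b : GV} (h : (a, b) ∈ qry (Qugly1 S) (DCold m)) : False := by
  obtain ⟨w, ⟨u, c, u', _, _, _, ⟨ab, d, s, rfl⟩, rfl⟩, hp⟩ := h
  exact no_warm_cold (p := ab) (q := d) (s := s) (by simp) hp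

theorem ugly2_warm_empty {a b : GV} (h : (a, b) ∈ qry (Qugly2 S) (DWarm hl vl m)) :
    False := by
  obtain ⟨w, ⟨u, c, u', _, _, _, ⟨ab, d, s, rfl⟩, rfl⟩, hp⟩ := h
  exact no_cold_warm (p := ab) (q := d) (s := s) (by simp) hp

theorem ugly2_cold_empty {a b : GV} (h : (a, b) ∈ qry (Qugly2 S) (DCold m)) : False := by
  obtain ⟨w, ⟨u, c, u', _, _, _, _, rfl⟩, hp⟩ := h
  exact no_beta_cold (by simp) hp

theorem bad1_cold_empty {a b : GV} (h : (a, b) ∈ qry (Qbad1 S) (DCold m)) : False := by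
  obtain ⟨w, ⟨s, u, _, _, _, rfl⟩, hp⟩ := h
  exact no_beta_cold (by simp) hp

theorem bad2_cold_empty {a b : GV} (h : (a, b) ∈ qry (Qbad2 S) (DCold m)) : False := by
  obtain ⟨w, ⟨s, u, _, _, _, rfl⟩, hp⟩ := h
  exact no_beta_cold (by simp) hp

theorem badF_cold_empty {d d' : Bool} {s s' : ℕ} {a b : GV}
    (h : (a, b) ∈ qry (QbadF S d s d' s') (DCold m)) : False := by
  obtain ⟨w, ⟨u, u', b1, b2, _, _, rfl⟩, hp⟩ := h
  exact no_beta_cold (by simp) hp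

theorem bad1_warm_empty (h00 : vl 0 0 = 0) {a b : GV}
    (h : (a, b) ∈ qry (Qbad1 S) (DWarm hl vl m)) : False := by
  obtain ⟨w, ⟨s, u, hs, hs0, _, rfl⟩, hp⟩ := h
  obtain ⟨v, e0, v2, e1, _⟩ := hp
  rcases warm_inv e0 with ⟨_, _, hb0⟩ | ⟨_, hc0, _⟩ | ⟨i, j, _, _, _, hc0, _⟩ |
    ⟨i, j, _, _, _, hc0, _⟩
  · subst hb0
    rcases warm_inv e1 with ⟨ha1, hc1, _⟩ | ⟨ha1, hc1, _⟩ | ⟨i, j, _, _, ha1, hc1, _⟩ |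
      ⟨i, j, hi, hj, ha1, hc1, _⟩
    · simp at ha1
    · simp at hc1
    · simp at hc1
    · rw [GV.pt.injEq] at ha1
      obtain ⟨h1, h2⟩ := ha1
      rw [Sig.base.injEq] at hc1
      obtain ⟨-, -, -, hs'⟩ := hc1
      rw [hs', ← h1, ← h2, h00] at hs0
      exact hs0 rfl
  · simp at hc0
  · simp at hc0
  · simp at hc0

theorem bad2_warm_empty (hM0 : hl (m-1) m = 0) {a b : GV}
    (h : (a, b) ∈ qry (Qbad2 S) (DWarm hl vl m)) : False := by
  obtain ⟨w, ⟨s, u, hs, hs0, _, rfl⟩, hp⟩ := h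
  obtain ⟨v, e0, prest⟩ := hp
  obtain ⟨z, pu, ptail⟩ := (pathSat_append u).1 prest
  obtain ⟨z2, e1, z3, e2, _⟩ := ptail
  -- e2 : edge labeled ω from z2
  rcases warm_inv e2 with ⟨_, hc2, _⟩ | ⟨ha2, _, _⟩ | ⟨i, j, _, _, _, hc2, _⟩ |
    ⟨i, j, _, _, _, hc2, _⟩
  · simp at hc2
  · -- z2 = pt m m
    rcases warm_inv e1 with ⟨_, hc1, _⟩ | ⟨_, hc1, _⟩ | ⟨i, j, hi, hj, ha1, hc1, hb1⟩ |
      ⟨i, j, _, _, _, hc1, _⟩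
    · simp at hc1
    · simp at hc1
    · rw [hb1] at ha2
      rw [GV.pt.injEq] at ha2
      obtain ⟨h1, h2⟩ := ha2
      rw [Sig.base.injEq] at hc1
      obtain ⟨-, -, -, hs'⟩ := hc1
      have : i = m - 1 := by omega
      rw [hs', this, h2, hM0] at hs0
      exact hs0 rfl
    · simp at hc1
  · simp at hc2
  · simp at hc2

theorem badF_warm_empty
    (nHH : ∀ i j, i + 1 < m → j ≤ m → ((false, hl i j), (false, hl (i + 1) j)) ∉ F)
    (nHV : ∀ i j, i < m → j < m → ((false, hl i j), (true, vl (i + 1) j)) ∉ F)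
    (nVH : ∀ i j, i < m → j < m → ((true, vl i j), (false, hl i (j + 1))) ∉ F)
    (nVV : ∀ i j, i ≤ m → j + 1 < m → ((true, vl i j), (true, vl i (j + 1))) ∉ F)
    {d d' : Bool} {s s' : ℕ} (hF : ((d, s), (d', s')) ∈ F) {a b : GV}
    (h : (a, b) ∈ qry (QbadF S d s d' s') (DWarm hl vl m)) : False := by
  obtain ⟨w, ⟨u, u', b1, b2, _, _, rfl⟩, hp⟩ := h
  obtain ⟨v, e0, prest⟩ := hp
  obtain ⟨z1, pu, p2⟩ := (pathSat_append u).1 prest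
  obtain ⟨z2, e1, z3, e2, _⟩ := p2
  rcases warm_inv e1 with ⟨_, hc1, _⟩ | ⟨_, hc1, _⟩ | ⟨i, j, hi, hj, ha1, hc1, hb1⟩ |
    ⟨i, j, hi, hj, ha1, hc1, hb1⟩
  · simp at hc1
  · simp at hc1
  · -- first edge horizontal
    rw [Sig.base.injEq] at hc1
    obtain ⟨-, hd1, -, hs1⟩ := hc1
    rcases warm_inv e2 with ⟨hz2, hc2, _⟩ | ⟨hz2, hc2, _⟩ |
      ⟨i', j', hi', hj', hz2, hc2, hb2⟩ | ⟨i', j', hi', hj', hz2, hc2, hb2⟩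
    · simp at hc2
    · simp at hc2
    · rw [hb1] at hz2
      rw [GV.pt.injEq] at hz2
      obtain ⟨rfl, rfl⟩ := hz2
      rw [Sig.base.injEq] at hc2
      obtain ⟨-, hd2, -, hs2⟩ := hc2
      rw [hd1, hd2, hs1, hs2] at hF
      exact nHH i j (by omega) hj hF
    · rw [hb1] at hz2
      rw [GV.pt.injEq] at hz2
      obtain ⟨rfl, rfl⟩ := hz2
      rw [Sig.base.injEq] at hc2
      obtain ⟨-, hd2, -, hs2⟩ := hc2
      rw [hd1, hd2, hs1, hs2] at hF
      exact nHV i j hi hj' hF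
  · -- first edge vertical
    rw [Sig.base.injEq] at hc1
    obtain ⟨-, hd1, -, hs1⟩ := hc1
    rcases warm_inv e2 with ⟨hz2, hc2, _⟩ | ⟨hz2, hc2, _⟩ |
      ⟨i', j', hi', hj', hz2, hc2, hb2⟩ | ⟨i', j', hi', hj', hz2, hc2, hb2⟩
    · simp at hc2
    · simp at hc2
    · rw [hb1] at hz2
      rw [GV.pt.injEq] at hz2
      obtain ⟨rfl, rfl⟩ := hz2
      rw [Sig.base.injEq] at hc2
      obtain ⟨-, hd2, -, hs2⟩ := hc2
      rw [hd1, hd2, hs1, hs2] at hF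
      exact nVH i j hi' hj hF
    · rw [hb1] at hz2
      rw [GV.pt.injEq] at hz2
      obtain ⟨rfl, rfl⟩ := hz2
      rw [Sig.base.injEq] at hc2
      obtain ⟨-, hd2, -, hs2⟩ := hc2
      rw [hd1, hd2, hs1, hs2] at hF
      exact nVV i j hi hj' hF

theorem qstart_warm_empty {a b : GV} (h : (a, b) ∈ qry (Qstart S) (DWarm hl vl m)) :
    False := by
  obtain ⟨w, ⟨u, _, _, rfl⟩, hp⟩ := h
  exact no_alpha_warm (by simp) hp

/-- The cold staircase word. -/
def stair : ℕ → List Sig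
  | 0 => []
  | n+1 => Sig.base true false false 0 :: Sig.base false true false 0 :: stair n

theorem stair_path (hm : 1 ≤ m) :
    ∀ n a, a + n ≤ m → pathSat (DCold m) (.pt a a) (stair n) (.pt (a+n) (a+n)) := by
  intro n
  induction n with
  | zero => intro a _; rfl
  | succ n ih =>
      intro a ha
      have h1 : abv a a = true := by rw [abv_true_iff]; omega
      have h2 : abv (a+1) a = false := by rw [abv_false_iff]; omega
      refine ⟨.pt (a+1) a, ?_, .pt (a+1) (a+1), ?_, ?_⟩
      · have := DCold.H (m := m) a a (by omega) (by omega)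
        rwa [h1] at this
      · have := DCold.V (m := m) (a+1) a (by omega) (by omega)
        rwa [h2] at this
      · have := ih (a+1) (by omega)
        have harr : a + 1 + n = a + (n+1) := by omega
        rwa [harr] at this

theorem stair_mem (hS : 0 ∈ S) (n : ℕ) : stair n ∈ KStar.kstar (startBlock S) := by
  rw [Language.mem_kstar]
  refine ⟨List.replicate n [Sig.base true false false 0, Sig.base false true false 0],
    ?_, ?_⟩
  · induction n with
    | zero => rfl
    | succ n ih =>
        simp only [List.replicate_succ, List.flatten_cons, stair]
        rw [← ih]
        rfl
  · intro y hy
    rw [List.eq_of_mem_replicate hy]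
    exact ⟨_, _, rfl, ⟨0, hS, rfl⟩, ⟨0, hS, rfl⟩⟩
end Easy5
theorem easy_dir {S : Finset ℕ} {F : Finset ((Bool × ℕ) × (Bool × ℕ))} (hS : 0 ∈ S)
    (hgs : GridSol S F) : ¬ DeterminesOn (SigAlph S) (QQ S F) (Q0L S F) := by
  obtain ⟨m, hm, hl, vl, hlS, vlS, h00, hM0, nHH, nHV, nVH, nVV⟩ := hgs
  intro hdet
  have hagree : ∀ L ∈ QQ S F, qry L (DWarm hl vl m) = qry L (DCold m) := by
    intro L hL
    rcases hL with (hG | hB) | hU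
    · simp only [Qgood, Set.mem_insert_iff, Set.mem_singleton_iff] at hG
      rcases hG with rfl | rfl | rfl | rfl | rfl | rfl | rfl | rfl
      · exact q1_eq
      · exact q2_eq
      · exact q3_eq hS hlS vlS
      · exact q4_eq hS hlS vlS
      · exact (qry_add_comm _ _ _).trans
          ((single_eq hS hlS vlS false true).trans (qry_add_comm _ _ _))
      · exact single_eq hS hlS vlS false false
      · exact single_eq hS hlS vlS true true
      · exact (qry_add_comm _ _ _).trans
          ((single_eq hS hlS vlS true false).trans (qry_add_comm _ _ _))
    · rcases hB with hB | ⟨p, hpF, rfl⟩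
      · simp only [Set.mem_insert_iff, Set.mem_singleton_iff] at hB
        rcases hB with rfl | rfl
        · exact qry_eq_of_empty (fun a b h => bad1_warm_empty h00 h)
            (fun a b h => bad1_cold_empty h)
        · exact qry_eq_of_empty (fun a b h => bad2_warm_empty hM0 h)
            (fun a b h => bad2_cold_empty h)
      · obtain ⟨⟨d, s⟩, ⟨d', s'⟩⟩ := p
        exact qry_eq_of_empty
          (fun a b h => badF_warm_empty nHH nHV nVH nVV hpF h)
          (fun a b h => badF_cold_empty h)
    · simp only [Qugly, Set.mem_insert_iff, Set.mem_singleton_iff] at hU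
      rcases hU with rfl | rfl
      · exact qry_eq_of_empty (fun a b h => ugly1_warm_empty h)
          (fun a b h => ugly1_cold_empty h)
      · exact qry_eq_of_empty (fun a b h => ugly2_warm_empty h)
          (fun a b h => ugly2_cold_empty h)
  have heq := hdet GV (DWarm hl vl m) (DCold m) (warm_labelsIn hS hlS vlS)
    (cold_labelsIn hS) hagree
  have hmem : ((GV.X, GV.Y) : GV × GV) ∈ qry (Q0L S F) (DCold m) := by
    refine ⟨Sig.alpha :: (stair m ++ [Sig.omega]),
      Qstart_le_Q0L ⟨stair m, stair_mem hS m, ?_, rfl⟩, ?_⟩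
    · cases m with
      | zero => exact absurd hm (by omega)
      | succ n => simp [stair]
    · refine ⟨.pt 0 0, DCold.alpha,
        (pathSat_append _).2 ⟨.pt m m, ?_, pathSat_single.2 DCold.omega⟩⟩
      have := stair_path hm m 0 (by omega)
      simpa using this
  rw [← heq] at hmem
  obtain ⟨w, hw, hp⟩ := hmem
  rcases mem_Q0L_iff.1 hw with h | h | h | h | h | h
  · exact qstart_warm_empty ⟨w, h, hp⟩
  · exact bad1_warm_empty h00 ⟨w, h, hp⟩
  · exact bad2_warm_empty hM0 ⟨w, h, hp⟩
  · obtain ⟨p, hpF, hwp⟩ := h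
    obtain ⟨⟨d, s⟩, ⟨d', s'⟩⟩ := p
    exact badF_warm_empty nHH nHV nVH nVV hpF ⟨w, hwp, hp⟩
  · exact ugly1_warm_empty ⟨w, h, hp⟩
  · exact ugly2_warm_empty ⟨w, h, hp⟩
/-- Correctness of the reduction: the OGTP instance `⟨𝒮, ℱ⟩` has no
solution iff `𝒬` determines `Q₀`. -/
theorem reduction_correct (S : Finset ℕ) (F : Finset ((Bool × ℕ) × (Bool × ℕ)))
    (hS : 0 ∈ S) (hF : FWf S F) :
    (¬ GridSol S F) ↔ DeterminesOn (SigAlph S) (QQ S F) (Q0L S F) := by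
  constructor
  · exact hard_dir
  · intro hdet hgs
    exact easy_dir hS hgs hdet
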